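/- arXiv:1505.04821 — 5 statements merged into one kernel-verified Lean document; each statement's English description precedes it below -/
import Mathlib

section
/- Let Ω be a convex body in ℝ^{m+1} with 0 in its interior, having radial function ρ and support function h. Setting φ = log(1/h) and ψ = log ρ, the pair (φ, ψ) satisfies ψ(x) = min_{n ∈ S^m} (c(n,x) − φ(n)) and φ(n) = min_{x ∈ S^m} (c(n,x) − ψ(x)) for all x, n in S^m, where c(n,x) = −log⟨n,x⟩ when ⟨n,x⟩ > 0 and +∞ otherwise. -/
open MeasureTheory Metric Set Real
open scoped ENNReal

noncomputable section

abbrev Euc (m : ℕ) : Type := EuclideanSpace ℝ (Fin (m + 1))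

abbrev Sph (m : ℕ) : Type := Metric.sphere (0 : Euc m) 1

/-- geodesic distance on the sphere -/
def gdist {m : ℕ} (n x : Sph m) : ℝ :=
  Real.arccos (inner ℝ (n : Euc m) (x : Euc m))

/-- the logarithmic cost, with values in `[0,∞]` -/
def cost {m : ℕ} (n x : Sph m) : ℝ≥0∞ :=
  if 0 < (inner ℝ (n : Euc m) (x : Euc m) : ℝ) then
    ENNReal.ofReal (-Real.log (inner ℝ (n : Euc m) (x : Euc m))) else ∞

/-- the uniform probability measure on the sphere -/
def unif (m : ℕ) : Measure (Sph m) :=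
  ((volume : Measure (Euc m)).toSphere Set.univ)⁻¹ • (volume : Measure (Euc m)).toSphere

/-- the radial function of a set with respect to the origin -/
def radial {m : ℕ} (Ω : Set (Euc m)) (x : Sph m) : ℝ :=
  sSup {s : ℝ | 0 ≤ s ∧ s • (x : Euc m) ∈ Ω}

/-- the Euclidean cone generated by a subset of the sphere -/
def cone {m : ℕ} (A : Set (Sph m)) : Set (Euc m) :=
  {y | ∃ r : ℝ, 0 ≤ r ∧ ∃ x ∈ A, y = r • (x : Euc m)}

/-- a subset of the sphere is spherically convex if the cone it generates is convex -/
def SphConvex {m : ℕ} (A : Set (Sph m)) : Prop := Convex ℝ (cone A)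

/-- open `r`-neighbourhood for the geodesic distance -/
def nbhd {m : ℕ} (V : Set (Sph m)) (r : ℝ) : Set (Sph m) :=
  {y | ∃ x ∈ V, gdist y x < r}

/-- the spherical polar set -/
def spolar {m : ℕ} (ω : Set (Sph m)) : Set (Sph m) :=
  {y | ∀ x ∈ ω, (inner ℝ (y : Euc m) (x : Euc m) : ℝ) ≤ 0}

/-- the support function of a star-shaped set -/
def suppFn {m : ℕ} (F : Set (Euc m)) (n : Sph m) : ℝ :=
  ⨆ x : Sph m, radial F x * (inner ℝ (x : Euc m) (n : Euc m) : ℝ)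

/-- the polar set in Euclidean space -/
def polar {m : ℕ} (F : Set (Euc m)) : Set (Euc m) :=
  {n | ∀ x ∈ F, (inner ℝ x n : ℝ) ≤ 1}

/-- the logarithmic cost, with values in `ℝ ∪ {±∞}` -/
def costE {m : ℕ} (n x : Sph m) : EReal :=
  if 0 < (inner ℝ (n : Euc m) (x : Euc m) : ℝ) then
    ((-Real.log (inner ℝ (n : Euc m) (x : Euc m)) : ℝ) : EReal) else ⊤

section helpers
variable {m : ℕ} {Ω : Set (Euc m)}

lemma sph_norm (x : Sph m) : ‖(x : Euc m)‖ = 1 := by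
  have := x.2; rwa [mem_sphere_zero_iff_norm] at this

lemma sph_inner_le_one (x n : Sph m) : (inner ℝ (x : Euc m) (n : Euc m) : ℝ) ≤ 1 := by
  have := real_inner_le_norm (x : Euc m) (n : Euc m)
  rwa [sph_norm, sph_norm, mul_one] at this

lemma radial_set_nonempty (hint : (0 : Euc m) ∈ interior Ω) (x : Sph m) :
    {s : ℝ | 0 ≤ s ∧ s • (x : Euc m) ∈ Ω}.Nonempty :=
  ⟨0, le_refl 0, by simpa using interior_subset hint⟩

lemma radial_bddAbove (hcomp : IsCompact Ω) (x : Sph m) :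
    BddAbove {s : ℝ | 0 ≤ s ∧ s • (x : Euc m) ∈ Ω} := by
  obtain ⟨R, hR⟩ := isBounded_iff_forall_norm_le.1 hcomp.isBounded
  refine ⟨R, fun s hs => ?_⟩
  have := hR _ hs.2
  rwa [norm_smul, sph_norm, mul_one, Real.norm_eq_abs, abs_of_nonneg hs.1] at this

lemma le_radial (hcomp : IsCompact Ω) {x : Sph m} {s : ℝ} (h0 : 0 ≤ s)
    (hmem : s • (x : Euc m) ∈ Ω) : s ≤ radial Ω x :=
  le_csSup (radial_bddAbove hcomp x) ⟨h0, hmem⟩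

lemma exists_eps (hint : (0 : Euc m) ∈ interior Ω) :
    ∃ ε > 0, ∀ y : Euc m, ‖y‖ < ε → y ∈ Ω := by
  obtain ⟨ε, hε, hb⟩ := Metric.isOpen_iff.1 isOpen_interior 0 hint
  exact ⟨ε, hε, fun y hy => interior_subset (hb (by simpa [mem_ball, dist_zero_right] using hy))⟩

lemma radial_pos (hcomp : IsCompact Ω) (hint : (0 : Euc m) ∈ interior Ω) (x : Sph m) :
    0 < radial Ω x := by
  obtain ⟨ε, hε, hb⟩ := exists_eps hint
  have : (ε/2) ≤ radial Ω x := by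
    refine le_radial hcomp (by linarith) (hb _ ?_)
    rw [norm_smul, sph_norm, mul_one, Real.norm_eq_abs, abs_of_nonneg (by linarith)]
    linarith
  linarith

lemma radial_smul_mem (hcomp : IsCompact Ω) (hint : (0 : Euc m) ∈ interior Ω) (x : Sph m) :
    radial Ω x • (x : Euc m) ∈ Ω := by
  have hcl : IsClosed {s : ℝ | 0 ≤ s ∧ s • (x : Euc m) ∈ Ω} := by
    have : {s : ℝ | 0 ≤ s ∧ s • (x : Euc m) ∈ Ω}
        = Set.Ici 0 ∩ (fun s : ℝ => s • (x : Euc m)) ⁻¹' Ω := rfl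
    rw [this]
    exact isClosed_Ici.inter (hcomp.isClosed.preimage (by continuity))
  exact (hcl.csSup_mem (radial_set_nonempty hint x) (radial_bddAbove hcomp x)).2

lemma suppFn_bddAbove (hcomp : IsCompact Ω) (hint : (0 : Euc m) ∈ interior Ω) (n : Sph m) :
    BddAbove (Set.range fun x : Sph m => radial Ω x * (inner ℝ (x : Euc m) (n : Euc m) : ℝ)) := by
  obtain ⟨R, hR⟩ := isBounded_iff_forall_norm_le.1 hcomp.isBounded
  refine ⟨R, ?_⟩
  rintro _ ⟨x, rfl⟩
  have h0 : 0 < radial Ω x := radial_pos hcomp hint x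
  have hle : radial Ω x ≤ R := by
    have := hR _ (radial_smul_mem hcomp hint x)
    rwa [norm_smul, sph_norm, mul_one, Real.norm_eq_abs, abs_of_pos h0] at this
  calc radial Ω x * (inner ℝ (x : Euc m) (n : Euc m) : ℝ)
      ≤ radial Ω x * 1 := by
        exact mul_le_mul_of_nonneg_left (sph_inner_le_one x n) h0.le
    _ ≤ R := by linarith

lemma radial_inner_le_suppFn (hcomp : IsCompact Ω) (hint : (0 : Euc m) ∈ interior Ω)
    (x n : Sph m) :
    radial Ω x * (inner ℝ (x : Euc m) (n : Euc m) : ℝ) ≤ suppFn Ω n :=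
  le_ciSup (suppFn_bddAbove hcomp hint n) x

instance sph_nonempty {m : ℕ} : Nonempty (Sph m) :=
  ((NormedSpace.sphere_nonempty (x := (0 : Euc m)) (r := 1)).mpr (by norm_num)).to_subtype

/-- attainment for claim 2: the support function maximum is attained -/
lemma exists_max_x (hcomp : IsCompact Ω) (hint : (0 : Euc m) ∈ interior Ω) (n : Sph m) :
    ∃ x : Sph m, 0 < (inner ℝ (n : Euc m) (x : Euc m) : ℝ) ∧
      radial Ω x * (inner ℝ (x : Euc m) (n : Euc m) : ℝ) = suppFn Ω n := by
  obtain ⟨ε, hε, hb⟩ := exists_eps hint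
  have hne : Ω.Nonempty := ⟨0, interior_subset hint⟩
  have hcont : Continuous fun y : Euc m => (inner ℝ y (n : Euc m) : ℝ) :=
    continuous_id.inner continuous_const
  obtain ⟨y₀, hy₀, hmax⟩ := hcomp.exists_isMaxOn hne hcont.continuousOn
  have hmax' : ∀ y ∈ Ω, (inner ℝ y (n : Euc m) : ℝ) ≤ (inner ℝ y₀ (n : Euc m) : ℝ) :=
    fun y hy => hmax hy
  have hεn : ((ε/2) • (n : Euc m)) ∈ Ω := by
    refine hb _ ?_
    rw [norm_smul, sph_norm, mul_one, Real.norm_eq_abs, abs_of_nonneg (by linarith)]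
    linarith
  have hy₀pos : 0 < (inner ℝ y₀ (n : Euc m) : ℝ) := by
    have h1 := hmax' _ hεn
    have h2 : (inner ℝ ((ε/2) • (n : Euc m)) (n : Euc m) : ℝ) = ε/2 := by
      rw [real_inner_smul_left, real_inner_self_eq_norm_sq, sph_norm]; ring
    rw [h2] at h1
    linarith
  have hy₀ne : y₀ ≠ 0 := by
    intro h; rw [h] at hy₀pos; simp at hy₀pos
  set x : Sph m := ⟨‖y₀‖⁻¹ • y₀, by
    rw [mem_sphere_zero_iff_norm, norm_smul, norm_inv, norm_norm,
      inv_mul_cancel₀ (norm_ne_zero_iff.2 hy₀ne)]⟩ with hx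
  have hxy : (x : Euc m) = ‖y₀‖⁻¹ • y₀ := rfl
  have hny : 0 < ‖y₀‖ := norm_pos_iff.2 hy₀ne
  have hix : (inner ℝ (x : Euc m) (n : Euc m) : ℝ) = ‖y₀‖⁻¹ * (inner ℝ y₀ (n : Euc m) : ℝ) := by
    rw [hxy, real_inner_smul_left]
  have hixpos : 0 < (inner ℝ (x : Euc m) (n : Euc m) : ℝ) := by
    rw [hix]; positivity
  have hrad : ‖y₀‖ ≤ radial Ω x := by
    refine le_radial hcomp hny.le ?_
    rw [hxy, smul_smul, mul_inv_cancel₀ (norm_ne_zero_iff.2 hy₀ne), one_smul]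
    exact hy₀
  have key : radial Ω x * (inner ℝ (x : Euc m) (n : Euc m) : ℝ) = (inner ℝ y₀ (n : Euc m) : ℝ) := by
    have h1 : radial Ω x * (inner ℝ (x : Euc m) (n : Euc m) : ℝ)
        = (inner ℝ (radial Ω x • (x : Euc m)) (n : Euc m) : ℝ) := (real_inner_smul_left _ _ _).symm
    have h2 := hmax' _ (radial_smul_mem hcomp hint x)
    have h3 : (inner ℝ y₀ (n : Euc m) : ℝ) = ‖y₀‖ * (inner ℝ (x : Euc m) (n : Euc m) : ℝ) := by
      rw [hix]; field_simp
    have h4 : (inner ℝ y₀ (n : Euc m) : ℝ) ≤ radial Ω x * (inner ℝ (x : Euc m) (n : Euc m) : ℝ) := by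
      rw [h3]; exact mul_le_mul_of_nonneg_right hrad hixpos.le
    rw [h1]; exact le_antisymm (h1 ▸ h2) (h1 ▸ h4)
  have hsupp : suppFn Ω n = (inner ℝ y₀ (n : Euc m) : ℝ) := by
    refine le_antisymm ?_ ?_
    · refine ciSup_le fun x' => ?_
      have h1 : radial Ω x' * (inner ℝ (x' : Euc m) (n : Euc m) : ℝ)
          = (inner ℝ (radial Ω x' • (x' : Euc m)) (n : Euc m) : ℝ) :=
        (real_inner_smul_left _ _ _).symm
      rw [h1]; exact hmax' _ (radial_smul_mem hcomp hint x')
    · rw [← key]; exact radial_inner_le_suppFn hcomp hint x n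
  refine ⟨x, ?_, by rw [key, hsupp]⟩
  rwa [real_inner_comm]

/-- attainment for claim 1: supporting hyperplane at the radial boundary point -/
lemma exists_max_n (hconv : Convex ℝ Ω) (hcomp : IsCompact Ω)
    (hint : (0 : Euc m) ∈ interior Ω) (x : Sph m) :
    ∃ n : Sph m, 0 < (inner ℝ (n : Euc m) (x : Euc m) : ℝ) ∧
      radial Ω x * (inner ℝ (x : Euc m) (n : Euc m) : ℝ) = suppFn Ω n := by
  obtain ⟨ε, hε, hb⟩ := exists_eps hint
  have hρpos : 0 < radial Ω x := radial_pos hcomp hint x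
  have hpmem : radial Ω x • (x : Euc m) ∈ Ω := radial_smul_mem hcomp hint x
  have hpnotint : radial Ω x • (x : Euc m) ∉ interior Ω := by
    intro hpint
    obtain ⟨δ, hδ, hball⟩ := Metric.isOpen_iff.1 isOpen_interior _ hpint
    have hmem : (radial Ω x + δ/2) • (x : Euc m) ∈ Ω := by
      refine interior_subset (hball ?_)
      rw [mem_ball, dist_eq_norm]
      have heq : (radial Ω x + δ/2) • (x : Euc m) - radial Ω x • (x : Euc m)
          = (δ/2) • (x : Euc m) := by
        rw [← sub_smul]; ring_nf
      rw [heq, norm_smul, sph_norm, mul_one, Real.norm_eq_abs, abs_of_nonneg (by linarith)]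
      linarith
    have := le_radial hcomp (by linarith) hmem
    linarith
  obtain ⟨f, hf⟩ := geometric_hahn_banach_open_point (hconv.interior) isOpen_interior hpnotint
  have hfp0 : 0 < f (radial Ω x • (x : Euc m)) := by
    have := hf 0 hint; simpa using this
  have hfle : ∀ a ∈ Ω, f a ≤ f (radial Ω x • (x : Euc m)) := by
    intro a ha
    by_contra hcon
    push_neg at hcon
    have hfa0 : 0 < f a := lt_trans hfp0 hcon
    have hsdiv : f (radial Ω x • (x : Euc m)) / f a < 1 := (div_lt_one hfa0).2 hcon
    have hsdiv0 : 0 < f (radial Ω x • (x : Euc m)) / f a := by positivity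
    set s := (f (radial Ω x • (x : Euc m)) / f a + 1) / 2 with hs
    have hs0 : 0 < s := by rw [hs]; linarith
    have hs1 : s < 1 := by rw [hs]; linarith
    have hmem : s • a ∈ interior Ω := by
      have := hconv.combo_interior_closure_mem_interior hint
        (subset_closure ha) (a := 1 - s) (b := s) (by linarith) hs0.le (by ring)
      simpa using this
    have hlt := hf _ hmem
    rw [ContinuousLinearMap.map_smul, smul_eq_mul] at hlt
    have hgt : f (radial Ω x • (x : Euc m)) < s * f a := by
      have h5 : f (radial Ω x • (x : Euc m)) / f a < s := by rw [hs]; linarith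
      calc f (radial Ω x • (x : Euc m)) = (f (radial Ω x • (x : Euc m)) / f a) * f a := by
            field_simp
        _ < s * f a := mul_lt_mul_of_pos_right h5 hfa0
    linarith
  set v : Euc m := (InnerProductSpace.toDual ℝ (Euc m)).symm f with hv
  have hvinner : ∀ y : Euc m, (inner ℝ v y : ℝ) = f y := fun y =>
    InnerProductSpace.toDual_symm_apply
  have hvne : v ≠ 0 := by
    intro h
    have := hvinner (radial Ω x • (x : Euc m))
    rw [h, inner_zero_left] at this
    linarith
  have hnv : 0 < ‖v‖ := norm_pos_iff.2 hvne
  set n : Sph m := ⟨‖v‖⁻¹ • v, by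
    rw [mem_sphere_zero_iff_norm, norm_smul, norm_inv, norm_norm,
      inv_mul_cancel₀ (norm_ne_zero_iff.2 hvne)]⟩ with hn
  have hncoe : (n : Euc m) = ‖v‖⁻¹ • v := rfl
  have hinner_n : ∀ y : Euc m, (inner ℝ (n : Euc m) y : ℝ) = ‖v‖⁻¹ * f y := by
    intro y; rw [hncoe, real_inner_smul_left, hvinner]
  have hnp : 0 < (inner ℝ (n : Euc m) (radial Ω x • (x : Euc m)) : ℝ) := by
    rw [hinner_n]; positivity
  have hnx : 0 < (inner ℝ (n : Euc m) (x : Euc m) : ℝ) := by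
    have heq : (inner ℝ (n : Euc m) (radial Ω x • (x : Euc m)) : ℝ)
        = radial Ω x * (inner ℝ (n : Euc m) (x : Euc m) : ℝ) := real_inner_smul_right _ _ _
    nlinarith
  refine ⟨n, hnx, ?_⟩
  have key : radial Ω x * (inner ℝ (x : Euc m) (n : Euc m) : ℝ)
      = (inner ℝ (n : Euc m) (radial Ω x • (x : Euc m)) : ℝ) := by
    have h := real_inner_smul_right (n : Euc m) (x : Euc m) (radial Ω x)
    rw [h, real_inner_comm]
  refine le_antisymm (radial_inner_le_suppFn hcomp hint x n) ?_
  refine ciSup_le fun x' => ?_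
  have h1 : radial Ω x' * (inner ℝ (x' : Euc m) (n : Euc m) : ℝ)
      = (inner ℝ (n : Euc m) (radial Ω x' • (x' : Euc m)) : ℝ) := by
    have h := real_inner_smul_right (n : Euc m) (x' : Euc m) (radial Ω x')
    rw [h, real_inner_comm]
  rw [h1, key, hinner_n, hinner_n]
  exact mul_le_mul_of_nonneg_left (hfle _ (radial_smul_mem hcomp hint x')) (by positivity)

lemma suppFn_pos (hcomp : IsCompact Ω) (hint : (0 : Euc m) ∈ interior Ω) (n : Sph m) :
    0 < suppFn Ω n := by
  obtain ⟨x, h1, h2⟩ := exists_max_x hcomp hint n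
  have hρ := radial_pos hcomp hint x
  have h1' : 0 < (inner ℝ (x : Euc m) (n : Euc m) : ℝ) := by
    rw [real_inner_comm]; exact h1
  nlinarith

lemma log_eq_aux {ρ i H : ℝ} (hρ : 0 < ρ) (hi : 0 < i) (hH : ρ * i = H) :
    -Real.log i - Real.log (1 / H) = Real.log ρ := by
  rw [one_div, Real.log_inv, ← hH, Real.log_mul hρ.ne' hi.ne']; ring

lemma log_le_aux {ρ i H : ℝ} (hρ : 0 < ρ) (hi : 0 < i) (hH : 0 < H) (hle : ρ * i ≤ H) :
    Real.log ρ ≤ -Real.log i - Real.log (1 / H) := by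
  have h0 : 0 < ρ * i := by positivity
  have h := (Real.log_le_log_iff h0 hH).2 hle
  rw [Real.log_mul hρ.ne' hi.ne'] at h
  rw [one_div, Real.log_inv]; linarith

lemma log_eq_aux2 {ρ i H : ℝ} (hρ : 0 < ρ) (hi : 0 < i) (hH : ρ * i = H) :
    -Real.log i - Real.log ρ = Real.log (1 / H) := by
  rw [one_div, Real.log_inv, ← hH, Real.log_mul hρ.ne' hi.ne']; ring

lemma log_le_aux2 {ρ i H : ℝ} (hρ : 0 < ρ) (hi : 0 < i) (hH : 0 < H) (hle : ρ * i ≤ H) :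
    Real.log (1 / H) ≤ -Real.log i - Real.log ρ := by
  have h0 : 0 < ρ * i := by positivity
  have h := (Real.log_le_log_iff h0 hH).2 hle
  rw [Real.log_mul hρ.ne' hi.ne'] at h
  rw [one_div, Real.log_inv]; linarith

end helpers

/-- `φ = log (1/h)` and `ψ = log ρ` are `c`-transforms of each other,
the minima being attained. -/
theorem support_radial_c_concave (m : ℕ) (Ω : Set (Euc m)) (hconv : Convex ℝ Ω)
    (hcomp : IsCompact Ω) (hint : (0 : Euc m) ∈ interior Ω) :
    ∀ φ ψ : Sph m → ℝ,
      (∀ n, φ n = Real.log (1 / suppFn Ω n)) → (∀ x, ψ x = Real.log (radial Ω x)) →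
      (∀ x : Sph m,
        IsLeast (Set.range fun n : Sph m => costE n x - (φ n : EReal)) (ψ x : EReal)) ∧
      (∀ n : Sph m,
        IsLeast (Set.range fun x : Sph m => costE n x - (ψ x : EReal)) (φ n : EReal)) := by
  intro φ ψ hφ hψ
  constructor
  · intro x
    constructor
    · obtain ⟨n, hpos, heq⟩ := exists_max_n hconv hcomp hint x
      refine ⟨n, ?_⟩
      have hρ := radial_pos hcomp hint x
      have hxnpos : 0 < (inner ℝ (x : Euc m) (n : Euc m) : ℝ) := by
        rw [real_inner_comm]; exact hpos
      have hcomm : (inner ℝ (x : Euc m) (n : Euc m) : ℝ) = (inner ℝ (n : Euc m) (x : Euc m) : ℝ) :=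
        real_inner_comm _ _
      rw [hcomm] at heq
      show costE n x - (φ n : EReal) = (ψ x : EReal)
      unfold costE
      rw [if_pos hpos, ← EReal.coe_sub, hφ, hψ, EReal.coe_eq_coe_iff]
      exact log_eq_aux hρ hpos heq
    · rintro b ⟨n', rfl⟩
      by_cases h : 0 < (inner ℝ (n' : Euc m) (x : Euc m) : ℝ)
      · have hρ := radial_pos hcomp hint x
        have hH := suppFn_pos hcomp hint n'
        have hle : radial Ω x * (inner ℝ (n' : Euc m) (x : Euc m) : ℝ) ≤ suppFn Ω n' := by
          have h2 := radial_inner_le_suppFn hcomp hint x n'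
          have hcomm : (inner ℝ (x : Euc m) (n' : Euc m) : ℝ)
              = (inner ℝ (n' : Euc m) (x : Euc m) : ℝ) := real_inner_comm _ _
          rwa [hcomm] at h2
        show (ψ x : EReal) ≤ costE n' x - (φ n' : EReal)
        unfold costE
        rw [if_pos h, ← EReal.coe_sub, hφ, hψ, EReal.coe_le_coe_iff]
        exact log_le_aux hρ h hH hle
      · show (ψ x : EReal) ≤ costE n' x - (φ n' : EReal)
        unfold costE
        rw [if_neg h, EReal.top_sub_coe]
        exact le_top
  · intro n
    constructor
    · obtain ⟨x, hpos, heq⟩ := exists_max_x hcomp hint n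
      refine ⟨x, ?_⟩
      have hρ := radial_pos hcomp hint x
      have hcomm : (inner ℝ (x : Euc m) (n : Euc m) : ℝ) = (inner ℝ (n : Euc m) (x : Euc m) : ℝ) :=
        real_inner_comm _ _
      rw [hcomm] at heq
      show costE n x - (ψ x : EReal) = (φ n : EReal)
      unfold costE
      rw [if_pos hpos, ← EReal.coe_sub, hφ, hψ, EReal.coe_eq_coe_iff]
      exact log_eq_aux2 hρ hpos heq
    · rintro b ⟨x', rfl⟩
      by_cases h : 0 < (inner ℝ (n : Euc m) (x' : Euc m) : ℝ)
      · have hρ := radial_pos hcomp hint x'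
        have hH := suppFn_pos hcomp hint n
        have hle : radial Ω x' * (inner ℝ (n : Euc m) (x' : Euc m) : ℝ) ≤ suppFn Ω n := by
          have h2 := radial_inner_le_suppFn hcomp hint x' n
          have hcomm : (inner ℝ (x' : Euc m) (n : Euc m) : ℝ)
              = (inner ℝ (n : Euc m) (x' : Euc m) : ℝ) := real_inner_comm _ _
          rwa [hcomm] at h2
        show (φ n : EReal) ≤ costE n x' - (ψ x' : EReal)
        unfold costE
        rw [if_pos h, ← EReal.coe_sub, hφ, hψ, EReal.coe_le_coe_iff]
        exact log_le_aux2 hρ h hH hle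
      · show (φ n : EReal) ≤ costE n x' - (ψ x' : EReal)
        unfold costE
        rw [if_neg h, EReal.top_sub_coe]
        exact le_top
end
end

section
/- If a Borel probability measure μ on S^m satisfies μ(ω) < σ(ω_{π/2}) for every nonempty closed spherically convex set ω ⊊ S^m (σ the uniform probability measure), then μ is not supported in any closed hemisphere; consequently sup_{x∈S^m} d(x, supp μ) < π/2. -/
open MeasureTheory Metric Set Real
open scoped ENNReal

noncomputable section

/-- the support of a measure on the sphere -/
def msupport {m : ℕ} (μ : Measure (Sph m)) : Set (Sph m) :=
  {x | ∀ ε > (0 : ℝ), 0 < μ (Metric.ball x ε)}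

lemma unif_le_one (m : ℕ) (s : Set (Sph m)) : unif m s ≤ 1 := by
  unfold unif
  rw [Measure.smul_apply, smul_eq_mul]
  calc ((volume : Measure (Euc m)).toSphere Set.univ)⁻¹ * (volume : Measure (Euc m)).toSphere s
      ≤ ((volume : Measure (Euc m)).toSphere Set.univ)⁻¹ *
        (volume : Measure (Euc m)).toSphere Set.univ := by
        exact mul_le_mul_right (measure_mono (Set.subset_univ _)) _
    _ ≤ 1 := by
        set a := (volume : Measure (Euc m)).toSphere Set.univ
        rcases eq_or_ne a 0 with h | h
        · simp [h]
        rcases eq_or_ne a ∞ with h' | h'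
        · simp [h']
        · rw [ENNReal.inv_mul_cancel h h']

lemma arccos_antitone : Antitone Real.arccos := by
  intro x y h
  unfold Real.arccos
  exact sub_le_sub_left (Real.monotone_arcsin h) _

lemma key_lemma (m : ℕ) (μ : Measure (Sph m)) [IsProbabilityMeasure μ]
    (halex : ∀ ω : Set (Sph m), ω.Nonempty → IsClosed ω → SphConvex ω → ω ≠ Set.univ →
      μ ω < unif m (nbhd ω (π / 2))) (n : Sph m) :
    ∃ y ∈ msupport μ, 0 < (inner ℝ (y : Euc m) (n : Euc m) : ℝ) := by
  set H : Set (Sph m) := {x : Sph m | (inner ℝ (x : Euc m) (n : Euc m) : ℝ) ≤ 0} with hHdef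
  have hn1 : ‖(n : Euc m)‖ = 1 := by
    have := n.2
    simpa [mem_sphere_zero_iff_norm] using this
  have hinn : (inner ℝ (n : Euc m) (n : Euc m) : ℝ) = 1 := by
    rw [real_inner_self_eq_norm_sq, hn1]; norm_num
  have hcont : Continuous fun x : Sph m => (inner ℝ (x : Euc m) (n : Euc m) : ℝ) :=
    Continuous.inner continuous_subtype_val continuous_const
  have hclosed : IsClosed H := isClosed_le hcont continuous_const
  have hne : H.Nonempty := by
    refine ⟨⟨-(n : Euc m), by simp [mem_sphere_zero_iff_norm, hn1]⟩, ?_⟩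
    show (inner ℝ (-(n : Euc m)) (n : Euc m) : ℝ) ≤ 0
    rw [inner_neg_left, hinn]; norm_num
  have hconv : SphConvex H := by
    have hcone : cone H = {y : Euc m | (inner ℝ y (n : Euc m) : ℝ) ≤ 0} := by
      ext y
      constructor
      · rintro ⟨r, hr, x, hx, rfl⟩
        have : (inner ℝ (r • (x : Euc m)) (n : Euc m) : ℝ) = r * inner ℝ (x : Euc m) (n : Euc m) :=
          real_inner_smul_left _ _ _
        simp only [Set.mem_setOf_eq, this]
        exact mul_nonpos_of_nonneg_of_nonpos hr hx
      · intro hy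
        rcases eq_or_ne y 0 with rfl | hy0
        · exact ⟨0, le_refl 0, hne.choose, hne.choose_spec, by simp⟩
        · have hny : ‖y‖ ≠ 0 := norm_ne_zero_iff.mpr hy0
          refine ⟨‖y‖, norm_nonneg y, ⟨‖y‖⁻¹ • y, ?_⟩, ?_, ?_⟩
          · simp [mem_sphere_zero_iff_norm, norm_smul, abs_of_nonneg
              (inv_nonneg.mpr (norm_nonneg y)), inv_mul_cancel₀ hny]
          · show (inner ℝ (‖y‖⁻¹ • y) (n : Euc m) : ℝ) ≤ 0
            rw [real_inner_smul_left]
            exact mul_nonpos_of_nonneg_of_nonpos (inv_nonneg.mpr (norm_nonneg y)) hy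
          · simp [smul_smul, mul_inv_cancel₀ hny]
    unfold SphConvex
    rw [hcone]
    have hset : {y : Euc m | (inner ℝ y (n : Euc m) : ℝ) ≤ 0}
        = {y : Euc m | ((innerSL ℝ (n : Euc m)) y : ℝ) ≤ 0} := by
      ext y
      simp only [Set.mem_setOf_eq, innerSL_apply_apply]
      rw [real_inner_comm]
    rw [hset]
    exact convex_halfSpace_le ((innerSL ℝ (n : Euc m)).toLinearMap.isLinear) 0
  have hnuniv : H ≠ Set.univ := by
    intro h
    have : n ∈ H := h ▸ Set.mem_univ n
    rw [hHdef, Set.mem_setOf_eq, hinn] at this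
    linarith
  have hlt : μ H < 1 :=
    lt_of_lt_of_le (halex H hne hclosed hconv hnuniv) (unif_le_one m _)
  by_contra hcon
  push_neg at hcon
  have hsub : msupport μ ⊆ H := fun y hy => hcon y hy
  have hHc : μ Hᶜ = 0 := by
    apply measure_null_of_locally_null
    intro x hx
    have hxns : x ∉ msupport μ := fun h => hx (hsub h)
    rw [msupport, Set.mem_setOf_eq] at hxns
    push_neg at hxns
    obtain ⟨ε, hε, hεz⟩ := hxns
    exact ⟨Metric.ball x ε, nhdsWithin_le_nhds (Metric.ball_mem_nhds x hε),
      le_antisymm hεz zero_le⟩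
  have : μ H = 1 := (prob_compl_eq_zero_iff hclosed.measurableSet).mp hHc
  rw [this] at hlt
  exact lt_irrefl _ hlt

/-- under Alexandrov's condition, `μ` is not supported in a closed
hemisphere, and every point is at geodesic distance `< π/2` from the support. -/
theorem not_supported_in_hemisphere (m : ℕ) (μ : Measure (Sph m))
    [IsProbabilityMeasure μ]
    (halex : ∀ ω : Set (Sph m), ω.Nonempty → IsClosed ω → SphConvex ω → ω ≠ Set.univ →
      μ ω < unif m (nbhd ω (π / 2))) :
    (∀ n : Sph m, ¬ (msupport μ ⊆ {x : Sph m | (inner ℝ (x : Euc m) (n : Euc m) : ℝ) ≤ 0})) ∧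
    ∃ r : ℝ, r < π / 2 ∧ ∀ x : Sph m, ∃ y ∈ msupport μ, gdist x y ≤ r := by
  
  have key := key_lemma m μ halex
  constructor
  · intro n hsub
    obtain ⟨y, hy, hpos⟩ := key n
    have := hsub hy
    rw [Set.mem_setOf_eq] at this
    linarith
  · -- compactness argument
    choose y hy hpos using key
    have hpos' : ∀ x : Sph m, 0 < (inner ℝ (x : Euc m) (y x : Euc m) : ℝ) := fun x => by
      rw [real_inner_comm]; exact hpos x
    set U : Sph m → Set (Sph m) :=
      fun x => {z : Sph m | (inner ℝ (x : Euc m) (y x : Euc m) : ℝ) / 2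
        < (inner ℝ (z : Euc m) (y x : Euc m) : ℝ)} with hU
    have hUopen : ∀ x, IsOpen (U x) :=
      fun x => isOpen_lt continuous_const
        (Continuous.inner continuous_subtype_val continuous_const)
    have hUmem : ∀ x : Sph m, x ∈ U x := fun x => by
      simp only [hU, Set.mem_setOf_eq]
      linarith [hpos' x]
    have hcover : (Set.univ : Set (Sph m)) ⊆ ⋃ x : Sph m, U x :=
      fun z _ => Set.mem_iUnion.mpr ⟨z, hUmem z⟩
    obtain ⟨t, ht⟩ := isCompact_univ.elim_finite_subcover U hUopen hcover
    have hx0 : ∃ x0 : Sph m, True := by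
      refine ⟨⟨EuclideanSpace.single 0 1, ?_⟩, trivial⟩
      simp [mem_sphere_zero_iff_norm, EuclideanSpace.norm_single]
    obtain ⟨x0, -⟩ := hx0
    have htne : t.Nonempty := by
      obtain ⟨i, hi, -⟩ := Set.mem_iUnion₂.mp (ht (Set.mem_univ x0))
      exact ⟨i, hi⟩
    set c : ℝ := t.inf' htne (fun x => (inner ℝ (x : Euc m) (y x : Euc m) : ℝ) / 2) with hc
    have hcpos : 0 < c := by
      rw [hc, Finset.lt_inf'_iff]
      intro b hb
      linarith [hpos' b]
    refine ⟨Real.arccos c, Real.arccos_lt_pi_div_two.mpr hcpos, ?_⟩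
    intro z
    obtain ⟨i, hi, hzU⟩ := Set.mem_iUnion₂.mp (ht (Set.mem_univ z))
    refine ⟨y i, hy i, ?_⟩
    have hle : c ≤ (inner ℝ (z : Euc m) (y i : Euc m) : ℝ) := by
      have h1 : c ≤ (inner ℝ (i : Euc m) (y i : Euc m) : ℝ) / 2 :=
        Finset.inf'_le _ hi
      have h2 : (inner ℝ (i : Euc m) (y i : Euc m) : ℝ) / 2
          < (inner ℝ (z : Euc m) (y i : Euc m) : ℝ) := hzU
      linarith
    calc gdist z (y i) = Real.arccos (inner ℝ (z : Euc m) (y i : Euc m) : ℝ) := rfl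
      _ ≤ Real.arccos c := arccos_antitone hle
end
end

section
/- Let θ be a Borel probability measure on S^m. The map ω ↦ θ(ω), restricted to the space of nonempty compact spherically convex subsets of S^m with the Hausdorff metric, is continuous at every ω with θ(∂ω) = 0. -/
open MeasureTheory Metric Set Real
open scoped ENNReal

noncomputable section

set_option maxHeartbeats 1000000
open scoped RealInnerProductSpace

lemma norm_coe_sph {m : ℕ} (x : Sph m) : ‖(x : Euc m)‖ = 1 := by
  have := x.2
  simpa [mem_sphere_iff_norm] using this

lemma mem_of_coe_mem_cone {m : ℕ} {K : Set (Sph m)} {x : Sph m}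
    (hx : (x : Euc m) ∈ cone K) : x ∈ K := by
  obtain ⟨r, hr, y, hy, hxy⟩ := hx
  have hn : ‖(x : Euc m)‖ = 1 := norm_coe_sph x
  rw [hxy, norm_smul, norm_coe_sph, mul_one, Real.norm_eq_abs, abs_of_nonneg hr] at hn
  have hxy' : x = y := Subtype.ext (by rw [hxy, hn, one_smul])
  rwa [hxy']

lemma isClosed_cone {m : ℕ} {K : Set (Sph m)} (hK : IsCompact K) :
    IsClosed (cone K) := by
  apply isClosed_of_closure_subset
  intro z hz
  set R : ℝ := ‖z‖ + 1 with hR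
  set C : Set (Euc m) := (fun p : ℝ × Sph m => p.1 • (p.2 : Euc m)) '' (Icc 0 R ×ˢ K) with hC
  have hCc : IsCompact C :=
    (isCompact_Icc.prod hK).image (continuous_fst.smul (continuous_subtype_val.comp continuous_snd))
  have hsub : cone K ∩ ball 0 R ⊆ C := by
    rintro w ⟨⟨r, hr, y, hy, rfl⟩, hw⟩
    refine ⟨(r, y), ⟨⟨hr, ?_⟩, hy⟩, rfl⟩
    have : ‖r • (y : Euc m)‖ < R := by simpa using hw
    rw [norm_smul, norm_coe_sph, mul_one, Real.norm_eq_abs, abs_of_nonneg hr] at this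
    linarith
  have h1 : z ∈ closure (cone K ∩ ball 0 R) := by
    rw [Metric.mem_closure_iff] at hz ⊢
    intro ε hε
    obtain ⟨w, hw1, hw2⟩ := hz (min ε 1) (lt_min hε one_pos)
    refine ⟨w, ⟨hw1, ?_⟩, lt_of_lt_of_le hw2 (min_le_left _ _)⟩
    have h3 : dist z w < 1 := lt_of_lt_of_le hw2 (min_le_right _ _)
    have h4 : ‖w‖ < ‖z‖ + 1 := by
      calc ‖w‖ ≤ ‖z‖ + dist z w := by rw [dist_eq_norm]; exact norm_le_insert z w
      _ < ‖z‖ + 1 := by linarith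
    simpa [hR, mem_ball, dist_eq_norm] using h4
  have h2 : z ∈ C := by
    have := closure_mono hsub h1
    rwa [hCc.isClosed.closure_eq] at this
  obtain ⟨⟨r, y⟩, ⟨⟨hr, _⟩, hy⟩, rfl⟩ := h2
  exact ⟨r, hr, y, hy, rfl⟩

/-- Separation of a point of the sphere from a compact spherically convex set. -/
lemma sph_separation {m : ℕ} {K : Set (Sph m)} (hK : IsCompact K) (hKc : SphConvex K)
    (hne : K.Nonempty) {x : Sph m} (hx : x ∉ K) :
    ∃ u : Euc m, ‖u‖ = 1 ∧ 0 < ⟪u, (x : Euc m)⟫ ∧ ∀ y ∈ K, ⟪u, (y : Euc m)⟫ ≤ 0 := by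
  have hxc : (x : Euc m) ∉ cone K := fun h => hx (mem_of_coe_mem_cone h)
  obtain ⟨f, u0, hfs, hfx⟩ := geometric_hahn_banach_closed_point hKc (isClosed_cone hK) hxc
  obtain ⟨y0, hy0⟩ := hne
  have h0 : (0 : Euc m) ∈ cone K := ⟨0, le_refl 0, y0, hy0, by simp⟩
  have hu0 : 0 < u0 := by simpa using hfs 0 h0
  have hfy : ∀ y ∈ K, f (y : Euc m) ≤ 0 := by
    intro y hy
    by_contra h
    push_neg at h
    have hmem : ∀ r : ℝ, 0 ≤ r → r • (y : Euc m) ∈ cone K := fun r hr => ⟨r, hr, y, hy, rfl⟩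
    have h2 := hfs ((u0 / f (y : Euc m) + 1) • (y : Euc m))
      (hmem _ (by have := div_pos hu0 h; linarith))
    rw [f.map_smul] at h2
    simp only [smul_eq_mul] at h2
    rw [add_mul, div_mul_cancel₀ _ (ne_of_gt h), one_mul] at h2
    linarith
  obtain ⟨v, hv⟩ := (InnerProductSpace.toDual ℝ (Euc m)).surjective f
  have hvw : ∀ w : Euc m, ⟪v, w⟫ = f w := fun w => by
    rw [← hv]; simp [InnerProductSpace.toDual_apply_apply]
  have hfx' : 0 < f (x : Euc m) := lt_trans hu0 hfx
  have hvne : v ≠ 0 := by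
    intro h
    rw [← hvw] at hfx'
    simp [h] at hfx'
  refine ⟨‖v‖⁻¹ • v, ?_, ?_, ?_⟩
  · rw [norm_smul, Real.norm_eq_abs, abs_of_nonneg (by positivity),
      inv_mul_cancel₀ (norm_ne_zero_iff.2 hvne)]
  · rw [real_inner_smul_left, hvw]
    exact mul_pos (inv_pos.2 (norm_pos_iff.2 hvne)) hfx'
  · intro y hy
    rw [real_inner_smul_left, hvw]
    have := hfy y hy
    have hpos : (0:ℝ) < ‖v‖⁻¹ := inv_pos.2 (norm_pos_iff.2 hvne)
    exact mul_nonpos_of_nonneg_of_nonpos (le_of_lt hpos) this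


lemma mem_of_ball_subset {m : ℕ} {K W : Set (Sph m)} (hK : IsCompact K) (hKne : K.Nonempty)
    (hKc : SphConvex K) (hfin : EMetric.hausdorffEdist W K ≠ ⊤) {s : ℝ} (hs0 : 0 < s)
    (hs1 : s ≤ 1) (hd : hausdorffDist W K < s / 2) {x : Sph m}
    (hx : ball x (4 * s) ⊆ W) : x ∈ K := by
  by_contra hxK
  obtain ⟨u, hu1, hut, huK⟩ := sph_separation hK hKc hKne hxK
  set t : ℝ := ⟪u, (x : Euc m)⟫ with ht
  have ht1 : t ≤ 1 := by
    calc t ≤ ‖u‖ * ‖(x : Euc m)‖ := real_inner_le_norm u _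
    _ = 1 := by rw [hu1, norm_coe_sph, mul_one]
  set w : Euc m := (x : Euc m) + s • u with hw
  set N : ℝ := ‖w‖ with hNdef
  have hxn : ‖(x : Euc m)‖ = 1 := norm_coe_sph x
  have hN2 : N ^ 2 = 1 + 2 * (s * t) + s ^ 2 := by
    rw [hNdef, hw, @norm_add_sq_real, real_inner_smul_right, hxn, norm_smul, hu1,
      Real.norm_eq_abs, abs_of_nonneg hs0.le, ht, real_inner_comm]
    ring
  have hN1 : 1 < N := by nlinarith [norm_nonneg w, mul_pos hs0 hut]
  have hN2' : N ≤ 2 := by nlinarith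
  have hNpos : 0 < N := by linarith
  set z' : Euc m := N⁻¹ • w with hz'
  have hz'n : ‖z'‖ = 1 := by
    rw [hz', norm_smul, Real.norm_eq_abs, abs_of_nonneg (inv_nonneg.2 hNpos.le), ← hNdef,
      inv_mul_cancel₀ hNpos.ne']
  have hzmem : z' ∈ Metric.sphere (0 : Euc m) 1 := by
    rw [mem_sphere_iff_norm, sub_zero, hz'n]
  set z : Sph m := ⟨z', hzmem⟩ with hzdef
  -- z is close to x
  have hzx : dist z x < 4 * s := by
    have hdec : z' - (x : Euc m) = (N⁻¹ - 1) • (x : Euc m) + (N⁻¹ * s) • u := by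
      rw [hz', hw]; module
    have hb : ‖z' - (x : Euc m)‖ ≤ (1 - N⁻¹) + N⁻¹ * s := by
      rw [hdec]
      calc ‖(N⁻¹ - 1) • (x : Euc m) + (N⁻¹ * s) • u‖
          ≤ ‖(N⁻¹ - 1) • (x : Euc m)‖ + ‖(N⁻¹ * s) • u‖ := norm_add_le _ _
      _ = |N⁻¹ - 1| * 1 + |N⁻¹ * s| * 1 := by
          rw [norm_smul, norm_smul, hxn, hu1, Real.norm_eq_abs, Real.norm_eq_abs]
      _ = (1 - N⁻¹) + N⁻¹ * s := by
          have h1 : N⁻¹ ≤ 1 := by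
            rw [inv_le_one_iff₀]; right; linarith
          have h2 : 0 < N⁻¹ := inv_pos.2 hNpos
          rw [abs_of_nonpos (by linarith), abs_of_nonneg (by positivity)]
          ring
    have hNinv : N⁻¹ * N = 1 := inv_mul_cancel₀ hNpos.ne'
    have hNm1 : N - 1 ≤ 3 / 2 * s := by nlinarith
    have h3 : (1 - N⁻¹) + N⁻¹ * s < 4 * s := by
      have h4 : 1 - N⁻¹ ≤ N - 1 := by
        have h2 : 0 < N⁻¹ := inv_pos.2 hNpos
        nlinarith
      have h5 : N⁻¹ * s ≤ s := by
        have h6 : N⁻¹ ≤ 1 := by rw [inv_le_one_iff₀]; right; linarith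
        nlinarith
      nlinarith
    rw [Subtype.dist_eq, dist_eq_norm]
    exact lt_of_le_of_lt hb h3
  have hzW : z ∈ W := hx (mem_ball.2 hzx)
  -- z is far from K
  have hfar : ∀ y ∈ K, s / 2 ≤ dist z y := by
    intro y hy
    have hyn : ‖(y : Euc m)‖ = 1 := norm_coe_sph y
    have hiz : ⟪z', (y : Euc m)⟫ = N⁻¹ * (⟪(x : Euc m), (y : Euc m)⟫ + s * ⟪u, (y : Euc m)⟫) := by
      rw [hz', hw, real_inner_smul_left, inner_add_left, real_inner_smul_left]
    have hxy1 : ⟪(x : Euc m), (y : Euc m)⟫ ≤ 1 := by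
      calc ⟪(x : Euc m), (y : Euc m)⟫ ≤ ‖(x : Euc m)‖ * ‖(y : Euc m)‖ := real_inner_le_norm _ _
      _ = 1 := by rw [hxn, hyn, mul_one]
    have huy : ⟪u, (y : Euc m)⟫ ≤ 0 := huK y hy
    have h2 : 0 < N⁻¹ := inv_pos.2 hNpos
    have hizb : ⟪z', (y : Euc m)⟫ ≤ N⁻¹ := by
      rw [hiz]
      have : ⟪(x : Euc m), (y : Euc m)⟫ + s * ⟪u, (y : Euc m)⟫ ≤ 1 := by nlinarith
      nlinarith
    have hsq : ‖z' - (y : Euc m)‖ ^ 2 = 2 - 2 * ⟪z', (y : Euc m)⟫ := by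
      rw [@norm_sub_sq_real, hz'n, hyn]; ring
    have hNinv : N⁻¹ * N = 1 := inv_mul_cancel₀ hNpos.ne'
    have hlb : (s / 2) ^ 2 ≤ ‖z' - (y : Euc m)‖ ^ 2 := by
      rw [hsq]
      nlinarith
    rw [Subtype.dist_eq, dist_eq_norm]
    nlinarith [norm_nonneg (z' - (y : Euc m))]
  have hinf : infDist z K ≤ hausdorffDist W K := infDist_le_hausdorffDist_of_mem hzW hfin
  have : infDist z K < s / 2 := lt_of_le_of_lt hinf hd
  obtain ⟨y, hy, hdy⟩ := (infDist_lt_iff hKne).1 this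
  exact absurd hdy (not_lt.2 (hfar y hy))


/-- on spherically convex sets, `ω ↦ θ ω` is continuous at every `ω`
with `θ (∂ω) = 0`. -/
theorem measure_continuousAt_of_null_frontier (m : ℕ) (θ : Measure (Sph m))
    [IsProbabilityMeasure θ]
    (ω : {K : TopologicalSpace.NonemptyCompacts (Sph m) // SphConvex (K : Set (Sph m))})
    (hfr : θ (frontier (ω.1 : Set (Sph m))) = 0) :
    ContinuousAt
      (fun K : {K : TopologicalSpace.NonemptyCompacts (Sph m) //
          SphConvex (K : Set (Sph m))} => θ (K.1 : Set (Sph m))) ω := by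
  set W : Set (Sph m) := (ω.1 : Set (Sph m)) with hWdef
  have hWc : IsCompact W := ω.1.isCompact
  have hWne : W.Nonempty := ω.1.nonempty
  have hWcl : IsClosed W := hWc.isClosed
  have hθW : θ W ≠ ⊤ := (measure_lt_top θ W).ne
  -- the measure of the interior equals that of W
  have hint : θ (interior W) = θ W := by
    refine le_antisymm (measure_mono interior_subset) ?_
    calc θ W ≤ θ (interior W ∪ frontier W) := by
          refine measure_mono fun x hx => ?_
          by_cases hxi : x ∈ interior W
          · exact Or.inl hxi
          · exact Or.inr ⟨subset_closure hx, hxi⟩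
      _ ≤ θ (interior W) + θ (frontier W) := measure_union_le _ _
      _ = θ (interior W) := by rw [hfr, add_zero]
  -- the inner approximating sets
  set T : ℕ → Set (Sph m) := fun n => (thickening (1 / (n + 1) : ℝ) Wᶜ)ᶜ with hTdef
  have hTmono : Monotone T := by
    intro a b hab
    apply compl_subset_compl.2
    apply thickening_mono
    apply one_div_le_one_div_of_le (by positivity)
    have h : (a : ℝ) ≤ b := Nat.cast_le.2 hab
    linarith
  have hTball : ∀ n, ∀ x ∈ T n, ball x (1 / (n + 1) : ℝ) ⊆ W := by
    intro n x hx y hy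
    by_contra hyW
    exact hx (mem_thickening_iff.2 ⟨y, hyW, by rwa [dist_comm x y, ← mem_ball]⟩)
  have hTsub : interior W ⊆ ⋃ n, T n := by
    intro x hx
    obtain ⟨r, hr, hball⟩ := Metric.isOpen_iff.1 isOpen_interior x hx
    obtain ⟨n, hn⟩ := exists_nat_one_div_lt hr
    refine mem_iUnion.2 ⟨n, fun hmem => ?_⟩
    obtain ⟨z, hzW, hz⟩ := mem_thickening_iff.1 hmem
    exact hzW (interior_subset (hball (by rw [mem_ball, dist_comm]; push_cast at hn ⊢; linarith)))
  have hsup : θ W ≤ ⨆ n, θ (T n) := by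
    rw [← hint, ← hTmono.measure_iUnion]
    exact measure_mono hTsub
  -- upper bound machinery
  have hthick := tendsto_measure_cthickening_of_isClosed (μ := θ)
    ⟨1, one_pos, (measure_lt_top θ _).ne⟩ hWcl
  rw [ContinuousAt, ENNReal.tendsto_nhds hθW]
  intro ε hε
  have hlt : θ W < θ W + ε := ENNReal.lt_add_right hθW hε.ne'
  have hev : ∀ᶠ r in nhds (0 : ℝ), θ (cthickening r W) < θ W + ε :=
    hthick.eventually_lt_const hlt
  obtain ⟨η, hη, hηbd⟩ := Metric.eventually_nhds_iff.1 hev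
  -- lower bound: choose n with θ W - ε ≤ θ (T n)
  have hn : ∃ n : ℕ, θ W - ε ≤ θ (T n) := by
    by_cases hcase : θ W ≤ ε
    · exact ⟨0, by simpa [tsub_eq_zero_of_le hcase] using zero_le _⟩
    · push_neg at hcase
      have h1 : θ W - ε < θ W := ENNReal.sub_lt_self hθW (by
          intro h; rw [h] at hcase; exact absurd hcase (not_lt.2 zero_le)) hε.ne'
      obtain ⟨n, hn⟩ := lt_iSup_iff.1 (lt_of_lt_of_le h1 hsup)
      exact ⟨n, hn.le⟩
  obtain ⟨n, hTn⟩ := hn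
  set s₀ : ℝ := 1 / (n + 1) with hs₀def
  have hs₀ : 0 < s₀ := by positivity
  have hs₀1 : s₀ ≤ 1 := by
    rw [hs₀def, div_le_one (by positivity)]
    linarith [Nat.cast_nonneg n (α := ℝ)]
  rw [Metric.eventually_nhds_iff]
  refine ⟨min (η / 2) (s₀ / 8), by positivity, fun K hK => ?_⟩
  -- translate the distance hypothesis
  have hKd : hausdorffDist (K.1 : Set (Sph m)) W < min (η / 2) (s₀ / 8) := by
    rwa [Subtype.dist_eq, Metric.NonemptyCompacts.dist_eq] at hK
  have hKne : (K.1 : Set (Sph m)).Nonempty := K.1.nonempty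
  have hKc : IsCompact (K.1 : Set (Sph m)) := K.1.isCompact
  have hfin : EMetric.hausdorffEdist (K.1 : Set (Sph m)) W ≠ ⊤ :=
    Metric.hausdorffEdist_ne_top_of_nonempty_of_bounded hKne hWne
      hKc.isBounded hWc.isBounded
  have hfin' : EMetric.hausdorffEdist W (K.1 : Set (Sph m)) ≠ ⊤ := by
    rw [EMetric.hausdorffEdist] at hfin ⊢; rwa [Metric.hausdorffEDist_comm] at hfin
  constructor
  · -- lower bound: T n ⊆ K
    refine le_trans hTn (measure_mono fun x hx => ?_)
    refine mem_of_ball_subset hKc hKne K.2 hfin' (s := s₀ / 4) (by positivity)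
      (by linarith) ?_ (fun y hy => ?_)
    · rw [hausdorffDist_comm]
      calc hausdorffDist (K.1 : Set (Sph m)) W < min (η / 2) (s₀ / 8) := hKd
        _ ≤ s₀ / 8 := min_le_right _ _
        _ = s₀ / 4 / 2 := by ring
    · apply hTball n x hx
      have : (4 : ℝ) * (s₀ / 4) = s₀ := by ring
      rwa [this] at hy
  · -- upper bound: K ⊆ thickening (η/2) W
    have hsubK : (K.1 : Set (Sph m)) ⊆ thickening (η / 2) W := by
      intro x hx
      have h1 : infDist x W ≤ hausdorffDist (K.1 : Set (Sph m)) W :=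
        infDist_le_hausdorffDist_of_mem hx hfin
      have h2 : infDist x W < η / 2 :=
        lt_of_le_of_lt h1 (lt_of_lt_of_le hKd (min_le_left _ _))
      obtain ⟨y, hyW, hdy⟩ := (infDist_lt_iff hWne).1 h2
      exact mem_thickening_iff.2 ⟨y, hyW, hdy⟩
    have h3 : θ (K.1 : Set (Sph m)) ≤ θ (cthickening (η / 2) W) :=
      measure_mono (hsubK.trans (thickening_subset_cthickening _ _))
    have h4 : θ (cthickening (η / 2) W) < θ W + ε := by
      apply hηbd
      rw [Real.dist_eq, sub_zero, abs_of_pos (by positivity)]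
      linarith
    exact le_of_lt (lt_of_le_of_lt h3 h4)
end
end

section
/- Let μ be a Borel probability measure on S^m satisfying Alexandrov's condition μ(ω) < σ(ω_{π/2}) for every nonempty compact spherically convex ω ⊊ S^m. Then there exists α > 0 such that for every nonempty compact set F ⊂ S^m, μ(F) ≤ σ(F_{π/2 − α}). -/
open MeasureTheory Metric Set Real
open scoped ENNReal

noncomputable section

namespace AlexAux

variable {m : ℕ}

lemma norm_coe (x : Sph m) : ‖(x : Euc m)‖ = 1 := norm_eq_of_mem_sphere x

lemma inner_le_one (x y : Sph m) : (inner ℝ (x : Euc m) (y : Euc m) : ℝ) ≤ 1 := by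
  have h := real_inner_le_norm (x : Euc m) (y : Euc m)
  rwa [norm_coe, norm_coe, mul_one] at h

lemma neg_one_le_inner (x y : Sph m) : (-1 : ℝ) ≤ inner ℝ (x : Euc m) (y : Euc m) := by
  have h := abs_real_inner_le_norm (x : Euc m) (y : Euc m)
  rw [norm_coe, norm_coe, mul_one] at h
  linarith [(abs_le.mp h).1]

lemma gdist_lt_iff {x y : Sph m} {r : ℝ} (h0 : 0 < r) (hπ : r ≤ π) :
    gdist y x < r ↔ Real.cos r < inner ℝ (y : Euc m) (x : Euc m) := by
  constructor
  · intro h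
    have h1 : Real.cos r < Real.cos (gdist y x) :=
      Real.strictAntiOn_cos ⟨Real.arccos_nonneg _, Real.arccos_le_pi _⟩ ⟨h0.le, hπ⟩ h
    rwa [show gdist y x = Real.arccos (inner ℝ (y : Euc m) (x : Euc m)) from rfl, Real.cos_arccos (neg_one_le_inner _ _) (inner_le_one _ _)] at h1
  · intro h
    by_contra hc
    push_neg at hc
    have h2 := Real.cos_le_cos_of_nonneg_of_le_pi h0.le (Real.arccos_le_pi _) hc
    rw [Real.cos_arccos (neg_one_le_inner _ _) (inner_le_one _ _)] at h2
    linarith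

lemma nbhd_eq (F : Set (Sph m)) {r : ℝ} (h0 : 0 < r) (hπ : r ≤ π) :
    nbhd F r = {y : Sph m | ∃ x ∈ F, Real.cos r < inner ℝ (y : Euc m) (x : Euc m)} := by
  ext y
  constructor
  · rintro ⟨x, hx, h⟩; exact ⟨x, hx, (gdist_lt_iff h0 hπ).mp h⟩
  · rintro ⟨x, hx, h⟩; exact ⟨x, hx, (gdist_lt_iff h0 hπ).mpr h⟩

lemma isOpen_slab (F : Set (Sph m)) (t : ℝ) :
    IsOpen {y : Sph m | ∃ x ∈ F, t < inner ℝ (y : Euc m) (x : Euc m)} := by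
  have : {y : Sph m | ∃ x ∈ F, t < inner ℝ (y : Euc m) (x : Euc m)}
      = ⋃ x ∈ F, {y : Sph m | t < inner ℝ (y : Euc m) (x : Euc m)} := by
    ext y; simp [mem_iUnion]
  rw [this]
  exact isOpen_biUnion fun x _ =>
    isOpen_lt continuous_const (continuous_subtype_val.inner continuous_const)

lemma unif_univ (m : ℕ) : unif m Set.univ = 1 := by
  have h := (volume : Measure (Euc m)).toSphere_apply_univ
  have h0 : (volume : Measure (Euc m)).toSphere Set.univ ≠ 0 := by
    rw [h]
    refine mul_ne_zero ?_ (measure_ball_pos _ _ one_pos).ne'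
    simp [finrank_euclideanSpace_fin]
  have htop : (volume : Measure (Euc m)).toSphere Set.univ ≠ ∞ := measure_ne_top _ _
  rw [unif, Measure.smul_apply, smul_eq_mul, ENNReal.inv_mul_cancel h0 htop]

end AlexAux
namespace AlexAux

variable {m : ℕ}

lemma inner_sub_bound (y x x' : Sph m) :
    (inner ℝ (y : Euc m) (x : Euc m) : ℝ) - inner ℝ (y : Euc m) (x' : Euc m) ≤ dist x x' := by
  have h1 : (inner ℝ (y : Euc m) ((x : Euc m) - (x' : Euc m)) : ℝ)
      ≤ ‖(y : Euc m)‖ * ‖(x : Euc m) - (x' : Euc m)‖ := real_inner_le_norm _ _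
  rw [inner_sub_right, norm_coe, one_mul] at h1
  rwa [Subtype.dist_eq, dist_eq_norm]

lemma one_div_le_one (j : ℕ) : 1 / ((j : ℝ) + 1) ≤ 1 := by
  rw [div_le_one (by positivity)]
  linarith [Nat.cast_nonneg (α := ℝ) j]

lemma radius_pos (j : ℕ) : (0 : ℝ) < π / 2 - 1 / ((j : ℝ) + 1) := by
  have h1 := one_div_le_one j
  nlinarith [Real.pi_gt_three]

lemma radius_le (j : ℕ) : π / 2 - 1 / ((j : ℝ) + 1) ≤ π := by
  have h2 : (0 : ℝ) < 1 / ((j : ℝ) + 1) := by positivity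
  nlinarith [Real.pi_gt_three]

lemma step_main (m : ℕ) (μ : Measure (Sph m)) [IsProbabilityMeasure μ]
    (K : Set (Sph m)) (hKc : IsCompact K)
    (F : ℕ → Set (Sph m))
    (hFlt : ∀ n : ℕ, unif m (nbhd (F n) (π / 2 - 1 / ((n : ℝ) + 1))) < μ (F n))
    (happrox : ∀ ε > 0, ∃ j : ℕ, 1 / ((j : ℝ) + 1) < ε ∧
      (∀ x ∈ K, ∃ x' ∈ F j, dist x x' < ε) ∧ (∀ x' ∈ F j, ∃ x ∈ K, dist x' x < ε))
    (t : ℝ) (ht : 0 < t) :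
    unif m {y : Sph m | ∃ x ∈ K, t < inner ℝ (y : Euc m) (x : Euc m)} ≤ μ K := by
  have hstep : ∀ ε : ℝ, 0 < ε →
      unif m {y : Sph m | ∃ x ∈ K, t < inner ℝ (y : Euc m) (x : Euc m)}
        ≤ μ (cthickening ε K) := by
    intro ε hε
    obtain ⟨j, hj1, hjK, hjF⟩ := happrox (min (t / 4) ε) (lt_min (by linarith) hε)
    have hje : 1 / ((j : ℝ) + 1) < t / 4 := lt_of_lt_of_le hj1 (min_le_left _ _)
    have hsub : {y : Sph m | ∃ x ∈ K, t < inner ℝ (y : Euc m) (x : Euc m)}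
        ⊆ nbhd (F j) (π / 2 - 1 / ((j : ℝ) + 1)) := by
      rintro y ⟨x, hxK, hxt⟩
      obtain ⟨x', hx'F, hdist⟩ := hjK x hxK
      rw [nbhd_eq _ (radius_pos j) (radius_le j)]
      refine ⟨x', hx'F, ?_⟩
      rw [Real.cos_pi_div_two_sub]
      have hsin : Real.sin (1 / ((j : ℝ) + 1)) ≤ 1 / ((j : ℝ) + 1) :=
        Real.sin_le (by positivity)
      have hCS := inner_sub_bound y x x'
      have hd : dist x x' < t / 4 := lt_of_lt_of_le hdist (min_le_left _ _)
      linarith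
    calc unif m {y : Sph m | ∃ x ∈ K, t < inner ℝ (y : Euc m) (x : Euc m)}
        ≤ unif m (nbhd (F j) (π / 2 - 1 / ((j : ℝ) + 1))) := measure_mono hsub
      _ ≤ μ (F j) := (hFlt j).le
      _ ≤ μ (cthickening ε K) := by
          refine measure_mono fun x' hx' => ?_
          obtain ⟨x, hxK, hd⟩ := hjF x' hx'
          exact mem_cthickening_of_dist_le x' x ε K hxK
            (le_of_lt (lt_of_lt_of_le hd (min_le_right _ _)))
  have htend : Filter.Tendsto (fun r => μ (cthickening r K)) (nhdsWithin 0 (Ioi 0))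
      (nhds (μ K)) :=
    (tendsto_measure_cthickening_of_isClosed ⟨1, one_pos, measure_ne_top μ _⟩
      hKc.isClosed).mono_left nhdsWithin_le_nhds
  exact ge_of_tendsto htend (eventually_nhdsWithin_of_forall fun r hr => hstep r hr)

end AlexAux
namespace AlexAux

variable {m : ℕ}

lemma hull_facts (K : Set (Sph m)) (hKc : IsCompact K) (hKne : K.Nonempty)
    (y₀ : Sph m) (hy₀ : ∀ x ∈ K, (inner ℝ (y₀ : Euc m) (x : Euc m) : ℝ) ≤ 0) :
    ∃ ω : Set (Sph m), ω.Nonempty ∧ IsCompact ω ∧ SphConvex ω ∧ ω ≠ Set.univ ∧ K ⊆ ω ∧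
      (∀ y : Sph m, (∃ z ∈ ω, (0 : ℝ) < inner ℝ (y : Euc m) (z : Euc m)) →
        ∃ x ∈ K, (0 : ℝ) < inner ℝ (y : Euc m) (x : Euc m)) := by
  classical
  set C : Set (Euc m) := convexHull ℝ (Subtype.val '' K) with hC
  have hCconv : Convex ℝ C := convex_convexHull _ _
  have hKC : Subtype.val '' K ⊆ C := subset_convexHull _ _
  have hhalf : ∀ y : Euc m, (∀ x ∈ K, (inner ℝ y (x : Euc m) : ℝ) ≤ 0) →
      ∀ c ∈ C, (inner ℝ y c : ℝ) ≤ 0 := by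
    intro y hy
    have hconvhs : Convex ℝ {v : Euc m | (inner ℝ y v : ℝ) ≤ 0} := by
      intro a ha b hb s t hs ht hst
      simp only [mem_setOf_eq] at ha hb ⊢
      rw [inner_add_right, real_inner_smul_right, real_inner_smul_right]
      exact add_nonpos (mul_nonpos_of_nonneg_of_nonpos hs ha)
        (mul_nonpos_of_nonneg_of_nonpos ht hb)
    have hsubset : Subtype.val '' K ⊆ {v : Euc m | (inner ℝ y v : ℝ) ≤ 0} := by
      rintro v ⟨x, hx, rfl⟩; exact hy x hx
    exact fun c hc => convexHull_min hsubset hconvhs hc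
  set ω₀ : Set (Sph m) := {z : Sph m | ∃ c ∈ C, c ≠ 0 ∧ (z : Euc m) = ‖c‖⁻¹ • c} with hω₀
  have hKω₀ : K ⊆ ω₀ := by
    intro x hx
    refine ⟨(x : Euc m), hKC ⟨x, hx, rfl⟩, ?_, ?_⟩
    · intro h0
      have hn := norm_coe x
      rw [h0] at hn; simp at hn
    · rw [norm_coe, inv_one, one_smul]
  -- every element of ω₀ has the stated normalized form, and transfers positivity
  have htrans₀ : ∀ y : Sph m, ∀ z ∈ ω₀, (0 : ℝ) < inner ℝ (y : Euc m) (z : Euc m) →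
      ∃ x ∈ K, (0 : ℝ) < inner ℝ (y : Euc m) (x : Euc m) := by
    intro y z hz hyz
    obtain ⟨c, hc, hc0, hzc⟩ := hz
    by_contra hno
    push_neg at hno
    have h1 : (inner ℝ (y : Euc m) c : ℝ) ≤ 0 := hhalf _ (fun x hx => (hno x hx)) c hc
    rw [hzc, real_inner_smul_right] at hyz
    nlinarith [inv_nonneg.mpr (norm_nonneg c)]
  refine ⟨closure ω₀, hKne.mono (hKω₀.trans subset_closure),
    isClosed_closure.isCompact, ?_, ?_, hKω₀.trans subset_closure, ?_⟩
  · -- SphConvex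
    set D : Set (Euc m) := {d : Euc m | ∃ r : ℝ, 0 ≤ r ∧ ∃ c ∈ C, d = r • c} with hD
    have hDconv : Convex ℝ D := by
      rintro d₁ ⟨r₁, hr₁, c₁, hc₁, rfl⟩ d₂ ⟨r₂, hr₂, c₂, hc₂, rfl⟩ s t hs ht hst
      by_cases hu : s * r₁ + t * r₂ = 0
      · have h1 : s * r₁ = 0 := by nlinarith [mul_nonneg hs hr₁, mul_nonneg ht hr₂]
        have h2 : t * r₂ = 0 := by nlinarith [mul_nonneg hs hr₁, mul_nonneg ht hr₂]
        refine ⟨0, le_refl 0, c₁, hc₁, ?_⟩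
        rw [smul_smul, smul_smul, h1, h2]; simp
      · have hu' : 0 < s * r₁ + t * r₂ :=
          lt_of_le_of_ne (add_nonneg (mul_nonneg hs hr₁) (mul_nonneg ht hr₂)) (Ne.symm hu)
        refine ⟨s * r₁ + t * r₂, hu'.le,
          (s * r₁ / (s * r₁ + t * r₂)) • c₁ + (t * r₂ / (s * r₁ + t * r₂)) • c₂,
          hCconv hc₁ hc₂ (by positivity) (by positivity) (by field_simp), ?_⟩
        rw [smul_add, smul_smul, smul_smul, smul_smul, smul_smul]
        congr 2 <;> field_simp
    have hconeD : cone (closure ω₀) = closure D := by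
      apply Subset.antisymm
      · rintro y ⟨r, hr, x, hx, rfl⟩
        have hcont : ContinuousAt (fun z : Sph m => r • (z : Euc m)) x :=
          (continuous_subtype_val.const_smul r).continuousAt
        have h1 := mem_closure_image hcont hx
        refine closure_mono ?_ h1
        rintro v ⟨z, hz, rfl⟩
        obtain ⟨c, hc, hc0, hzc⟩ := hz
        refine ⟨r * ‖c‖⁻¹, by positivity, c, hc, ?_⟩
        show r • (z : Euc m) = (r * ‖c‖⁻¹) • c
        rw [hzc, smul_smul]
      · intro y hy
        by_cases hy0 : y = 0
        · obtain ⟨x, hx⟩ := hKne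
          exact ⟨0, le_refl 0, x, subset_closure (hKω₀ hx), by rw [hy0, zero_smul]⟩
        · have hyn : ‖y‖ ≠ 0 := norm_ne_zero_iff.mpr hy0
          have h2 : y ∈ closure ({v : Euc m | v ≠ 0} ∩ D) :=
            (isOpen_ne : IsOpen {v : Euc m | v ≠ 0}).inter_closure ⟨hy0, hy⟩
          have hfc : ContinuousAt (fun v : Euc m => ‖v‖⁻¹ • v) y :=
            ((continuous_norm.continuousAt).inv₀ hyn).smul continuousAt_id
          have h3 := mem_closure_image hfc h2
          have h4 : (fun v : Euc m => ‖v‖⁻¹ • v) '' ({v : Euc m | v ≠ 0} ∩ D)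
              ⊆ Subtype.val '' ω₀ := by
            rintro w ⟨v, ⟨hv0, r, hr, c, hc, rfl⟩, rfl⟩
            have hr0 : r ≠ 0 := by rintro rfl; exact hv0 (zero_smul ℝ c)
            have hc0 : c ≠ 0 := by rintro rfl; exact hv0 (smul_zero r)
            have hrpos : 0 < r := lt_of_le_of_ne hr (Ne.symm hr0)
            have hnc : ‖c‖ ≠ 0 := norm_ne_zero_iff.mpr hc0
            have hval : ‖r • c‖⁻¹ • (r • c) = ‖c‖⁻¹ • c := by
              rw [norm_smul, Real.norm_eq_abs, abs_of_pos hrpos, smul_smul]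
              congr 1
              field_simp
            have hmem : (‖c‖⁻¹ • c : Euc m) ∈ Metric.sphere (0 : Euc m) 1 := by
              rw [mem_sphere_zero_iff_norm, norm_smul, Real.norm_eq_abs,
                abs_of_nonneg (inv_nonneg.mpr (norm_nonneg c)),
                inv_mul_cancel₀ (norm_ne_zero_iff.mpr hc0)]
            exact ⟨⟨‖c‖⁻¹ • c, hmem⟩, ⟨c, hc, hc0, rfl⟩, by simpa using hval.symm⟩
          have h5 : (‖y‖⁻¹ • y : Euc m) ∈ closure (Subtype.val '' ω₀) :=
            closure_mono h4 h3
          have hymem : (‖y‖⁻¹ • y : Euc m) ∈ Metric.sphere (0 : Euc m) 1 := by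
            rw [mem_sphere_zero_iff_norm, norm_smul, Real.norm_eq_abs,
              abs_of_nonneg (inv_nonneg.mpr (norm_nonneg y)), inv_mul_cancel₀ hyn]
          exact ⟨‖y‖, norm_nonneg y, ⟨‖y‖⁻¹ • y, hymem⟩, closure_subtype.mpr h5,
            (smul_inv_smul₀ hyn y).symm⟩
    show SphConvex (closure ω₀)
    rw [SphConvex, hconeD]
    exact hDconv.closure
  · -- ω ≠ univ
    intro hcl
    have hy₀mem : y₀ ∈ closure ω₀ := by rw [hcl]; exact mem_univ y₀
    have hopen : IsOpen {z : Sph m | (0 : ℝ) < inner ℝ (y₀ : Euc m) (z : Euc m)} :=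
      isOpen_lt continuous_const (continuous_const.inner continuous_subtype_val)
    have hy₀in : y₀ ∈ {z : Sph m | (0 : ℝ) < inner ℝ (y₀ : Euc m) (z : Euc m)} := by
      have : (inner ℝ (y₀ : Euc m) (y₀ : Euc m) : ℝ) = 1 := by
        rw [real_inner_self_eq_norm_sq, norm_coe]; norm_num
      simp only [mem_setOf_eq, this]; norm_num
    obtain ⟨z, hz1, hz2⟩ := _root_.mem_closure_iff.mp hy₀mem _ hopen hy₀in
    obtain ⟨x, hx, hpos⟩ := htrans₀ y₀ z hz2 hz1
    exact absurd (hy₀ x hx) (not_le.mpr hpos)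
  · -- transfer
    rintro y ⟨z, hz, hyz⟩
    have hopen : IsOpen {w : Sph m | (0 : ℝ) < inner ℝ (y : Euc m) (w : Euc m)} :=
      isOpen_lt continuous_const (continuous_const.inner continuous_subtype_val)
    obtain ⟨z', hz'1, hz'2⟩ := _root_.mem_closure_iff.mp hz _ hopen hyz
    exact htrans₀ y z' hz'2 hz'1

end AlexAux
/-- reinforcement of Alexandrov's condition: uniform safety margin `α`. -/
theorem alexandrov_reinforced_margin (m : ℕ) (μ : Measure (Sph m))
    [IsProbabilityMeasure μ]
    (halex : ∀ ω : Set (Sph m), ω.Nonempty → IsCompact ω → SphConvex ω → ω ≠ Set.univ →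
      μ ω < unif m (nbhd ω (π / 2))) :
    ∃ α : ℝ, 0 < α ∧
      ∀ F : Set (Sph m), F.Nonempty → IsCompact F →
        μ F ≤ unif m (nbhd F (π / 2 - α)) := by
  by_contra hcon
  push_neg at hcon
  choose F hFne hFc hFlt using fun n : ℕ => hcon (1 / ((n : ℝ) + 1)) (by positivity)
  set G : ℕ → TopologicalSpace.NonemptyCompacts (Sph m) :=
    fun n => ⟨⟨F n, hFc n⟩, hFne n⟩ with hG
  obtain ⟨L, -, φ, hφ, hφtend⟩ := isCompact_univ.tendsto_subseq (x := G) (fun n => mem_univ _)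
  set K : Set (Sph m) := (L : Set (Sph m)) with hK
  have hKc : IsCompact K := L.isCompact
  have hKne : K.Nonempty := L.nonempty
  have happrox : ∀ ε > 0, ∃ j : ℕ, 1 / ((j : ℝ) + 1) < ε ∧
      (∀ x ∈ K, ∃ x' ∈ F j, dist x x' < ε) ∧ (∀ x' ∈ F j, ∃ x ∈ K, dist x' x < ε) := by
    intro ε hε
    obtain ⟨N, hN⟩ := Metric.tendsto_atTop.mp hφtend ε hε
    obtain ⟨n₁, hn₁⟩ := exists_nat_one_div_lt hε
    set n := max N n₁ with hn
    set j := φ n with hj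
    have hjn : n ≤ j := hφ.le_apply
    have hdist : dist (G j) L < ε := hN n (le_max_left _ _)
    have hHD : hausdorffDist (F j) K < ε := hdist
    have hfin : EMetric.hausdorffEdist (F j) K ≠ ⊤ :=
      hausdorffEdist_ne_top_of_nonempty_of_bounded (hFne j) hKne
        (hFc j).isBounded hKc.isBounded
    refine ⟨j, ?_, ?_, ?_⟩
    · calc 1 / ((j : ℝ) + 1) ≤ 1 / ((n₁ : ℝ) + 1) := by
            apply one_div_le_one_div_of_le (by positivity)
            have h1 : (n₁ : ℝ) ≤ (j : ℝ) := by
              exact_mod_cast le_trans (le_max_right N n₁) hjn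
            linarith
        _ < ε := hn₁
    · intro x hx
      obtain ⟨x', hx', hd⟩ := exists_dist_lt_of_hausdorffDist_lt' hx hHD hfin
      exact ⟨x', hx', by rwa [dist_comm]⟩
    · intro x' hx'
      exact exists_dist_lt_of_hausdorffDist_lt hx' hHD hfin
  by_cases hP : ∃ y₀ : Sph m, ∀ x ∈ K, (inner ℝ (y₀ : Euc m) (x : Euc m) : ℝ) ≤ 0
  · obtain ⟨y₀, hy₀⟩ := hP
    obtain ⟨ω, hωne, hωc, hωconv, hωuniv, hKω, htransfer⟩ :=
      AlexAux.hull_facts K hKc hKne y₀ hy₀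
    have hlt := halex ω hωne hωc hωconv hωuniv
    have h2 : nbhd ω (π / 2) = {y : Sph m | ∃ z ∈ ω, (0 : ℝ) < inner ℝ (y : Euc m) (z : Euc m)} := by
      rw [AlexAux.nbhd_eq ω (by positivity) (by linarith [Real.pi_pos])]
      simp [Real.cos_pi_div_two]
    have h3 : unif m (nbhd ω (π / 2))
        ≤ unif m {y : Sph m | ∃ x ∈ K, (0 : ℝ) < inner ℝ (y : Euc m) (x : Euc m)} := by
      rw [h2]; exact measure_mono fun y hy => htransfer y hy
    have h4 : {y : Sph m | ∃ x ∈ K, (0 : ℝ) < inner ℝ (y : Euc m) (x : Euc m)}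
        = ⋃ n : ℕ, {y : Sph m | ∃ x ∈ K, 1 / ((n : ℝ) + 1) < inner ℝ (y : Euc m) (x : Euc m)} := by
      ext y
      simp only [mem_setOf_eq, mem_iUnion]
      constructor
      · rintro ⟨x, hx, h⟩
        obtain ⟨n, hn⟩ := exists_nat_one_div_lt h
        exact ⟨n, x, hx, hn⟩
      · rintro ⟨n, x, hx, h⟩
        exact ⟨x, hx, lt_trans (by positivity) h⟩
    have hmono : Monotone (fun n : ℕ =>
        {y : Sph m | ∃ x ∈ K, 1 / ((n : ℝ) + 1) < inner ℝ (y : Euc m) (x : Euc m)}) := by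
      rintro a b hab y ⟨x, hx, h⟩
      refine ⟨x, hx, lt_of_le_of_lt ?_ h⟩
      apply one_div_le_one_div_of_le (by positivity)
      have : (a : ℝ) ≤ (b : ℝ) := by exact_mod_cast hab
      linarith
    have h6 : ∀ n : ℕ, unif m {y : Sph m | ∃ x ∈ K,
        1 / ((n : ℝ) + 1) < inner ℝ (y : Euc m) (x : Euc m)} ≤ μ K :=
      fun n => AlexAux.step_main m μ K hKc F hFlt happrox _ (by positivity)
    have h7 : unif m (nbhd ω (π / 2)) ≤ μ K := by
      refine h3.trans ?_
      rw [h4, hmono.measure_iUnion]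
      exact iSup_le h6
    exact absurd (lt_of_lt_of_le hlt (h7.trans (measure_mono hKω))) (lt_irrefl _)
  · push_neg at hP
    set A : ℕ → Set (Sph m) := fun n =>
      {y : Sph m | ∀ x ∈ K, (inner ℝ (y : Euc m) (x : Euc m) : ℝ) ≤ 1 / ((n : ℝ) + 1)} with hA
    have hAclosed : ∀ n, IsClosed (A n) := by
      intro n
      have he : A n = ⋂ x ∈ K,
          {y : Sph m | (inner ℝ (y : Euc m) (x : Euc m) : ℝ) ≤ 1 / ((n : ℝ) + 1)} := by
        ext y; simp [hA]
      rw [he]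
      exact isClosed_biInter fun x _ =>
        isClosed_le (continuous_subtype_val.inner continuous_const) continuous_const
    have hAanti : ∀ n, A (n + 1) ⊆ A n := by
      intro n y hy x hx
      refine le_trans (hy x hx) ?_
      apply one_div_le_one_div_of_le (by positivity)
      push_cast; linarith
    have hAempty : ∃ n, A n = ∅ := by
      by_contra hne
      push_neg at hne
      obtain ⟨y, hy⟩ := IsCompact.nonempty_iInter_of_sequence_nonempty_isCompact_isClosed A
        hAanti (fun n => hne n) (hAclosed 0).isCompact hAclosed
      simp only [mem_iInter] at hy
      obtain ⟨x, hx, hpos⟩ := hP y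
      have hle : (inner ℝ (y : Euc m) (x : Euc m) : ℝ) ≤ 0 :=
        ge_of_tendsto' tendsto_one_div_add_atTop_nhds_zero_nat (fun n => hy n x hx)
      linarith
    obtain ⟨n₀, hn₀⟩ := hAempty
    have hc0 : (0 : ℝ) < 1 / ((n₀ : ℝ) + 1) := by positivity
    have hcall : ∀ y : Sph m, ∃ x ∈ K, 1 / ((n₀ : ℝ) + 1) < inner ℝ (y : Euc m) (x : Euc m) := by
      intro y
      by_contra h
      push_neg at h
      have hmem : y ∈ A n₀ := fun x hx => h x hx
      rw [hn₀] at hmem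
      exact hmem
    obtain ⟨j, hj1, hjK, -⟩ := happrox (1 / ((n₀ : ℝ) + 1) / 4) (by positivity)
    have hruniv : nbhd (F j) (π / 2 - 1 / ((j : ℝ) + 1)) = Set.univ := by
      rw [AlexAux.nbhd_eq _ (AlexAux.radius_pos j) (AlexAux.radius_le j)]
      apply eq_univ_iff_forall.mpr
      intro y
      obtain ⟨x, hxK, hxc⟩ := hcall y
      obtain ⟨x', hx'F, hd⟩ := hjK x hxK
      refine ⟨x', hx'F, ?_⟩
      rw [Real.cos_pi_div_two_sub]
      have hsin : Real.sin (1 / ((j : ℝ) + 1)) ≤ 1 / ((j : ℝ) + 1) :=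
        Real.sin_le (by positivity)
      have hCS := AlexAux.inner_sub_bound y x x'
      linarith
    have hfin := hFlt j
    rw [hruniv, AlexAux.unif_univ] at hfin
    exact absurd hfin (not_lt.mpr prob_le_one)
end
end

section
/- Let c be the cost c(n,x) = -log⟨n,x⟩ for ⟨n,x⟩ > 0 and +∞ otherwise on S^m × S^m. Let ψ : S^m → ℝ ∪ {−∞} be upper semicontinuous such that for every x ∈ S^m, the open ball B(x,π/2) meets {ψ > −∞} in a set of positive uniform measure. Then the c-transform ψ^c(n) = inf_{x∈S^m}(c(n,x) − ψ(x)) is real-valued and Lipschitz on S^m, the infimum is attained for each n, and ψ^{cc} ≥ ψ. -/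
open MeasureTheory Metric Set Real
open scoped ENNReal

noncomputable section

/-- an upper semicontinuous real function on a nonempty compact space attains its maximum -/
lemma usc_exists_max {X : Type*} [TopologicalSpace X] [CompactSpace X] [Nonempty X]
    {h : X → ℝ} (hh : UpperSemicontinuous h) : ∃ x0, ∀ x, h x ≤ h x0 := by
  have hbdd : BddAbove (Set.range h) := by
    have hcov : (Set.univ : Set X) ⊆ ⋃ y : ℝ, h ⁻¹' Set.Iio y := by
      intro x _
      exact Set.mem_iUnion.2 ⟨h x + 1, by simp⟩
    obtain ⟨t, ht⟩ := isCompact_univ.elim_finite_subcover _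
      (fun y : ℝ => hh.isOpen_preimage y) hcov
    have htne : t.Nonempty := by
      have hmem := ht (Set.mem_univ (Classical.arbitrary X))
      simp only [Set.mem_iUnion, exists_prop] at hmem
      obtain ⟨y, hy, -⟩ := hmem
      exact ⟨y, hy⟩
    refine ⟨t.max' htne, ?_⟩
    rintro _ ⟨x, rfl⟩
    have hmem := ht (Set.mem_univ x)
    simp only [Set.mem_iUnion, exists_prop] at hmem
    obtain ⟨y, hyt, hxy⟩ := hmem
    exact le_trans (le_of_lt hxy) (t.le_max' y hyt)
  by_contra hcon
  push_neg at hcon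
  set S := sSup (Set.range h) with hS
  have hlt : ∀ x, h x < S := by
    intro x
    obtain ⟨x', hx'⟩ := hcon x
    exact lt_of_lt_of_le hx' (le_csSup hbdd ⟨x', rfl⟩)
  have hcov : (Set.univ : Set X) ⊆ ⋃ y : {y : ℝ // y < S}, h ⁻¹' Set.Iio (y : ℝ) := by
    intro x _
    obtain ⟨y, hy1, hy2⟩ := exists_between (hlt x)
    exact Set.mem_iUnion.2 ⟨⟨y, hy2⟩, hy1⟩
  obtain ⟨t, ht⟩ := isCompact_univ.elim_finite_subcover _
    (fun y : {y : ℝ // y < S} => hh.isOpen_preimage (y : ℝ)) hcov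
  have htne : (t.image Subtype.val).Nonempty := by
    have hmem := ht (Set.mem_univ (Classical.arbitrary X))
    simp only [Set.mem_iUnion, exists_prop] at hmem
    obtain ⟨y, hy, -⟩ := hmem
    exact ⟨y.val, Finset.mem_image_of_mem _ hy⟩
  set Y := (t.image Subtype.val).max' htne with hY
  have hYS : Y < S := by
    have hmem := (t.image Subtype.val).max'_mem htne
    rw [Finset.mem_image] at hmem
    obtain ⟨y, -, hy⟩ := hmem
    rw [hY, ← hy]; exact y.2
  have hSY : S ≤ Y := by
    refine csSup_le (Set.range_nonempty h) ?_
    rintro _ ⟨x, rfl⟩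
    have hmem := ht (Set.mem_univ x)
    simp only [Set.mem_iUnion, exists_prop] at hmem
    obtain ⟨y, hyt, hxy⟩ := hmem
    exact le_trans (le_of_lt hxy)
      ((t.image Subtype.val).le_max' _ (Finset.mem_image_of_mem _ hyt))
  exact absurd (lt_of_le_of_lt hSY hYS) (lt_irrefl S)

/-- an EReal-valued USC function avoiding ⊤ on a nonempty compact space is bounded above -/
lemma usc_bddAbove {X : Type*} [TopologicalSpace X] [CompactSpace X] [Nonempty X]
    {ψ : X → EReal} (htop : ∀ x, ψ x ≠ ⊤) (husc : UpperSemicontinuous ψ) :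
    ∃ M : ℝ, ∀ x, ψ x ≤ (M : EReal) := by
  have hcov : (Set.univ : Set X) ⊆ ⋃ y : ℝ, ψ ⁻¹' Set.Iio (y : EReal) := by
    intro x _
    obtain ⟨y, hy, -⟩ := EReal.exists_between_coe_real (lt_top_iff_ne_top.2 (htop x))
    exact Set.mem_iUnion.2 ⟨y, hy⟩
  obtain ⟨t, ht⟩ := isCompact_univ.elim_finite_subcover _
    (fun y : ℝ => husc.isOpen_preimage (y : EReal)) hcov
  have htne : t.Nonempty := by
    have hmem := ht (Set.mem_univ (Classical.arbitrary X))
    simp only [Set.mem_iUnion, exists_prop] at hmem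
    obtain ⟨y, hy, -⟩ := hmem
    exact ⟨y, hy⟩
  refine ⟨t.max' htne, fun x => ?_⟩
  have hmem := ht (Set.mem_univ x)
  simp only [Set.mem_iUnion, exists_prop] at hmem
  obtain ⟨y, hyt, hxy⟩ := hmem
  exact le_trans (le_of_lt hxy) (EReal.coe_le_coe_iff.2 (t.le_max' y hyt))

/-- product of a nonneg USC function with a nonneg continuous function is USC -/
lemma usc_mul_cont {X : Type*} [TopologicalSpace X] {a c : X → ℝ}
    (ha : UpperSemicontinuous a) (ha0 : ∀ x, 0 ≤ a x)
    (hc : Continuous c) (hc0 : ∀ x, 0 ≤ c x) :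
    UpperSemicontinuous fun x => a x * c x := by
  intro x0 y hy
  have hy0 : 0 < y := lt_of_le_of_lt (mul_nonneg (ha0 x0) (hc0 x0)) hy
  obtain ⟨ε, hε, hεy⟩ : ∃ ε > (0:ℝ), (a x0 + ε) * (c x0 + ε) < y := by
    have hcont : ContinuousAt (fun ε : ℝ => (a x0 + ε) * (c x0 + ε)) 0 := by fun_prop
    have hev : ∀ᶠ ε in nhds (0:ℝ), (a x0 + ε) * (c x0 + ε) < y := by
      have hval : (a x0 + 0) * (c x0 + 0) < y := by simpa using hy
      exact hcont (Iio_mem_nhds hval)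
    exact hev.exists_gt
  have h1 : ∀ᶠ x in nhds x0, a x < a x0 + ε := ha x0 _ (lt_add_of_pos_right _ hε)
  have h2 : ∀ᶠ x in nhds x0, c x < c x0 + ε :=
    hc.continuousAt (Iio_mem_nhds (lt_add_of_pos_right _ hε))
  filter_upwards [h1, h2] with x hx1 hx2
  exact lt_trans (mul_lt_mul'' hx1 hx2 (ha0 x) (hc0 x)) hεy

/-- exp-composition of a USC EReal-valued function avoiding ⊤ -/
lemma usc_exp_comp {X : Type*} [TopologicalSpace X] {ψ : X → EReal}
    (htop : ∀ x, ψ x ≠ ⊤) (husc : UpperSemicontinuous ψ) :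
    UpperSemicontinuous fun x => if ψ x = ⊥ then (0:ℝ) else Real.exp (ψ x).toReal := by
  intro x0 y hy
  have ha0 : ∀ x, (0:ℝ) ≤ if ψ x = ⊥ then (0:ℝ) else Real.exp (ψ x).toReal := by
    intro x; split
    · exact le_refl 0
    · exact (Real.exp_pos _).le
  have hy0 : 0 < y := lt_of_le_of_lt (ha0 x0) hy
  have hlt : ψ x0 < ((Real.log y : ℝ) : EReal) := by
    by_cases hb : ψ x0 = ⊥
    · rw [hb]; exact EReal.bot_lt_coe _
    · rw [← EReal.coe_toReal (htop x0) hb, EReal.coe_lt_coe_iff,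
        Real.lt_log_iff_exp_lt hy0]
      simpa [if_neg hb] using hy
  filter_upwards [husc x0 _ hlt] with x hx
  by_cases hb : ψ x = ⊥
  · simpa [if_pos hb] using hy0
  · rw [if_neg hb, ← Real.exp_log hy0]
    apply Real.exp_lt_exp.2
    rw [← EReal.coe_lt_coe_iff, EReal.coe_toReal (htop x) hb]
    exact hx

/-- regularity of the `c`-transform: `ψ^c` is real-valued and Lipschitz,
the infimum is attained, and `ψ^{cc} ≥ ψ`. -/
theorem c_transform_lipschitz (m : ℕ) (ψ : Sph m → EReal)
    (htop : ∀ x, ψ x ≠ ⊤) (husc : UpperSemicontinuous ψ)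
    (hpos : ∀ x : Sph m, 0 < unif m {z : Sph m | gdist z x < π / 2 ∧ ⊥ < ψ z}) :
    ∃ f : Sph m → ℝ,
      (∃ K : NNReal, LipschitzWith K f) ∧
      (∀ n : Sph m,
        IsLeast (Set.range fun x : Sph m => costE n x - ψ x) (f n : EReal)) ∧
      (∀ x : Sph m, ψ x ≤ ⨅ n : Sph m, (costE n x - (f n : EReal))) := by
  haveI hne' : Nonempty (Sph m) :=
    (NormedSpace.sphere_nonempty.mpr zero_le_one).coe_sort
  -- nonemptiness of the positive-measure sets
  have hne : ∀ n : Sph m, ∃ z : Sph m, gdist z n < π / 2 ∧ ⊥ < ψ z := by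
    intro n
    obtain ⟨z, hz⟩ := MeasureTheory.nonempty_of_measure_ne_zero (hpos n).ne'
    exact ⟨z, hz.1, hz.2⟩
  -- upper bound for ψ
  obtain ⟨M, hM⟩ := usc_bddAbove htop husc
  set A := Real.exp M with hA
  have hApos : 0 < A := Real.exp_pos M
  -- the exponential transform of ψ
  set a : Sph m → ℝ := fun x => if ψ x = ⊥ then (0:ℝ) else Real.exp (ψ x).toReal with ha
  have ha0 : ∀ x, 0 ≤ a x := by
    intro x; simp only [ha]; split
    · exact le_refl 0
    · exact (Real.exp_pos _).le
  have haA : ∀ x, a x ≤ A := by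
    intro x; simp only [ha]; split
    · exact hApos.le
    · next hb =>
      apply Real.exp_le_exp.2
      rw [← EReal.coe_le_coe_iff, EReal.coe_toReal (htop x) hb]
      exact hM x
  have hausc : UpperSemicontinuous a := usc_exp_comp htop husc
  have hapos : ∀ x, ⊥ < ψ x → 0 < a x := by
    intro x hx
    simp only [ha, if_neg hx.ne']
    exact Real.exp_pos _
  -- norm of points on the sphere
  have hnorm : ∀ x : Sph m, ‖(x : Euc m)‖ = 1 := fun x => by
    have := x.2; simpa [mem_sphere_iff_norm] using this
  -- the support-like function
  set G : Euc m → ℝ := fun y => ⨆ x : Sph m, a x * (inner ℝ (x : Euc m) y : ℝ) with hG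
  have hub : ∀ (y : Euc m) (x : Sph m), a x * (inner ℝ (x : Euc m) y : ℝ) ≤ A * ‖y‖ := by
    intro y x
    calc a x * (inner ℝ (x : Euc m) y : ℝ) ≤ a x * ‖y‖ := by
          apply mul_le_mul_of_nonneg_left _ (ha0 x)
          calc (inner ℝ (x : Euc m) y : ℝ) ≤ ‖(x : Euc m)‖ * ‖y‖ := real_inner_le_norm _ _
            _ = ‖y‖ := by rw [hnorm x, one_mul]
      _ ≤ A * ‖y‖ := mul_le_mul_of_nonneg_right (haA x) (norm_nonneg y)
  have hbdd : ∀ y : Euc m, BddAbove (Set.range fun x : Sph m => a x * (inner ℝ (x : Euc m) y : ℝ)) := by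
    intro y
    exact ⟨A * ‖y‖, by rintro _ ⟨x, rfl⟩; exact hub y x⟩
  have hterm_le : ∀ (y : Euc m) (x : Sph m), a x * (inner ℝ (x : Euc m) y : ℝ) ≤ G y := by
    intro y x
    exact le_ciSup (hbdd y) x
  -- one-sided Lipschitz estimate for G
  have hGlip : ∀ y y' : Euc m, G y ≤ G y' + A * ‖y - y'‖ := by
    intro y y'
    apply ciSup_le
    intro x
    have hsplit : a x * (inner ℝ (x : Euc m) y : ℝ)
        = a x * (inner ℝ (x : Euc m) y' : ℝ) + a x * (inner ℝ (x : Euc m) (y - y') : ℝ) := by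
      rw [inner_sub_right]; ring
    rw [hsplit]
    exact add_le_add (hterm_le y' x) (hub (y - y') x)
  have hGdist : ∀ y y' : Euc m, |G y - G y'| ≤ A * ‖y - y'‖ := by
    intro y y'
    rw [abs_sub_le_iff]
    constructor
    · linarith [hGlip y y']
    · have h2 := hGlip y' y
      have h3 : ‖y' - y‖ = ‖y - y'‖ := by rw [← norm_neg, neg_sub]
      rw [h3] at h2
      linarith
  set g : Sph m → ℝ := fun n => G (n : Euc m) with hg
  have hgdist : ∀ n n' : Sph m, |g n - g n'| ≤ A * dist n n' := by
    intro n n'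
    have := hGdist (n : Euc m) (n' : Euc m)
    rwa [← dist_eq_norm, ← Subtype.dist_eq] at this
  -- for each n, the supremum is attained at a point with positive inner product
  have hmax : ∀ n : Sph m, ∃ xb : Sph m,
      0 < (inner ℝ (xb : Euc m) (n : Euc m) : ℝ) ∧ ψ xb ≠ ⊥ ∧
      g n = a xb * (inner ℝ (xb : Euc m) (n : Euc m) : ℝ) := by
    intro n
    set c : Sph m → ℝ := fun x => max (inner ℝ (x : Euc m) (n : Euc m) : ℝ) 0 with hc
    have hccont : Continuous c :=
      (continuous_subtype_val.inner continuous_const).max continuous_const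
    have hc0 : ∀ x, 0 ≤ c x := fun x => le_max_right _ _
    obtain ⟨xb, hxb⟩ := usc_exists_max (usc_mul_cont hausc ha0 hccont hc0)
    obtain ⟨z, hz1, hz2⟩ := hne n
    have hzinner : 0 < (inner ℝ (z : Euc m) (n : Euc m) : ℝ) := by
      have := hz1
      rw [gdist] at this
      exact Real.arccos_lt_pi_div_two.mp this
    have hzpos : 0 < a z * c z := by
      apply mul_pos (hapos z hz2)
      simp only [hc]
      exact lt_max_of_lt_left hzinner
    have hxbpos : 0 < a xb * c xb := lt_of_lt_of_le hzpos (hxb z)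
    have haxb : 0 < a xb := by
      rcases lt_or_ge 0 (a xb) with h | h
      · exact h
      · exfalso
        have : a xb * c xb ≤ 0 := mul_nonpos_of_nonpos_of_nonneg h (hc0 xb)
        linarith
    have hcxb : 0 < (inner ℝ (xb : Euc m) (n : Euc m) : ℝ) := by
      rcases lt_or_ge 0 ((inner ℝ (xb : Euc m) (n : Euc m) : ℝ)) with h | h
      · exact h
      · exfalso
        have hcx : c xb = 0 := max_eq_right h
        rw [hcx, mul_zero] at hxbpos
        exact lt_irrefl 0 hxbpos
    have hcxb' : c xb = (inner ℝ (xb : Euc m) (n : Euc m) : ℝ) := max_eq_left hcxb.le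
    have hpsixb : ψ xb ≠ ⊥ := by
      intro hcon
      have : a xb = 0 := by simp [ha, hcon]
      rw [this] at haxb
      exact lt_irrefl 0 haxb
    refine ⟨xb, hcxb, hpsixb, ?_⟩
    apply le_antisymm
    · apply ciSup_le
      intro x
      calc a x * (inner ℝ (x : Euc m) (n : Euc m) : ℝ) ≤ a x * c x :=
            mul_le_mul_of_nonneg_left (le_max_left _ _) (ha0 x)
        _ ≤ a xb * c xb := hxb x
        _ = a xb * (inner ℝ (xb : Euc m) (n : Euc m) : ℝ) := by rw [hcxb']
    · have := hterm_le (n : Euc m) xb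
      exact this
  have hgpos : ∀ n, 0 < g n := by
    intro n
    obtain ⟨xb, h1, h2, h3⟩ := hmax n
    rw [h3]
    exact mul_pos (hapos xb (bot_lt_iff_ne_bot.2 h2)) h1
  -- continuity of g and the positive lower bound δ
  have hGlipW : LipschitzWith A.toNNReal G := by
    apply LipschitzWith.of_dist_le_mul
    intro y y'
    rw [Real.dist_eq, dist_eq_norm, Real.coe_toNNReal _ hApos.le]
    exact hGdist y y'
  have hgcont : Continuous g := hGlipW.continuous.comp continuous_subtype_val
  obtain ⟨n0, -, hn0⟩ := isCompact_univ.exists_isMinOn univ_nonempty hgcont.continuousOn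
  set δ := g n0 with hδ
  have hδpos : 0 < δ := hgpos n0
  have hδle : ∀ n, δ ≤ g n := fun n => hn0 (Set.mem_univ n)
  -- the candidate function
  refine ⟨fun n => -Real.log (g n), ?_, ?_, ?_⟩
  · -- Lipschitz
    refine ⟨(A / δ).toNNReal, LipschitzWith.of_dist_le_mul fun n n' => ?_⟩
    have hcoe : ((A / δ).toNNReal : ℝ) = A / δ :=
      Real.coe_toNNReal _ (div_nonneg hApos.le hδpos.le)
    rw [hcoe, Real.dist_eq]
    have hkey : ∀ p q : ℝ, δ ≤ p → δ ≤ q → Real.log q - Real.log p ≤ |q - p| / δ := by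
      intro p q hp hq
      have hp0 : 0 < p := lt_of_lt_of_le hδpos hp
      have hq0 : 0 < q := lt_of_lt_of_le hδpos hq
      have h1 : Real.log q - Real.log p = Real.log (q / p) := by
        rw [Real.log_div hq0.ne' hp0.ne']
      have h2 : Real.log (q / p) ≤ q / p - 1 :=
        Real.log_le_sub_one_of_pos (div_pos hq0 hp0)
      have h3 : q / p - 1 = (q - p) / p := by field_simp
      have h4 : (q - p) / p ≤ |q - p| / p := by gcongr; exact le_abs_self _
      have h5 : |q - p| / p ≤ |q - p| / δ := by gcongr
      linarith
    have habs : |(-Real.log (g n)) - (-Real.log (g n'))| ≤ |g n - g n'| / δ := by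
      rw [abs_sub_le_iff]
      constructor
      · have := hkey (g n) (g n') (hδle n) (hδle n')
        rw [abs_sub_comm] at this
        linarith
      · have := hkey (g n') (g n) (hδle n') (hδle n)
        linarith
    calc |(-Real.log (g n)) - (-Real.log (g n'))| ≤ |g n - g n'| / δ := habs
      _ ≤ (A * dist n n') / δ := by gcongr; exact hgdist n n'
      _ = A / δ * dist n n' := by ring
  · -- IsLeast
    intro n
    have hLB : ∀ x : Sph m, ((-Real.log (g n) : ℝ) : EReal) ≤ costE n x - ψ x := by
      intro x
      by_cases hcx : 0 < (inner ℝ (n : Euc m) (x : Euc m) : ℝ)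
      · by_cases hbx : ψ x = ⊥
        · rw [costE, if_pos hcx, hbx, EReal.coe_sub_bot]
          exact le_top
        · rw [costE, if_pos hcx, ← EReal.coe_toReal (htop x) hbx, ← EReal.coe_sub,
            EReal.coe_le_coe_iff]
          set r := (ψ x).toReal with hr
          have hax : a x = Real.exp r := by rw [ha]; exact if_neg hbx
          have hterm : Real.exp r * (inner ℝ (x : Euc m) (n : Euc m) : ℝ) ≤ g n := by
            have := hterm_le (n : Euc m) x
            rwa [hax] at this
          have hip : (inner ℝ (x : Euc m) (n : Euc m) : ℝ) = (inner ℝ (n : Euc m) (x : Euc m) : ℝ) :=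
            real_inner_comm _ _
          have hpos' : 0 < Real.exp r * (inner ℝ (x : Euc m) (n : Euc m) : ℝ) := by
            rw [hip]; exact mul_pos (Real.exp_pos r) hcx
          have hlog := (Real.log_le_log_iff hpos' (lt_of_lt_of_le hpos' hterm)).mpr hterm
          rw [Real.log_mul (Real.exp_ne_zero r) (by rw [hip]; exact hcx.ne'),
            Real.log_exp, hip] at hlog
          linarith
      · rw [costE, if_neg hcx]
        have htopsub : (⊤ : EReal) - ψ x = ⊤ := by
          by_cases hbx : ψ x = ⊥
          · rw [hbx]; exact EReal.top_sub_bot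
          · rw [← EReal.coe_toReal (htop x) hbx]; exact EReal.top_sub_coe _
        rw [htopsub]
        exact le_top
    constructor
    · obtain ⟨xb, h1, h2, h3⟩ := hmax n
      refine ⟨xb, ?_⟩
      have hcx : 0 < (inner ℝ (n : Euc m) (xb : Euc m) : ℝ) := by
        rw [real_inner_comm]; exact h1
      have hax : a xb = Real.exp (ψ xb).toReal := by rw [ha]; exact if_neg h2
      beta_reduce
      rw [costE, if_pos hcx, ← EReal.coe_toReal (htop xb) h2, ← EReal.coe_sub]
      congr 1
      rw [h3, hax, Real.log_mul (Real.exp_ne_zero _) h1.ne', Real.log_exp,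
        real_inner_comm (xb : Euc m) (n : Euc m)]
      ring
    · rintro _ ⟨x, rfl⟩
      exact hLB x
  · -- ψ^{cc} ≥ ψ
    intro x
    refine le_iInf fun n => ?_
    by_cases hbx : ψ x = ⊥
    · rw [hbx]; exact bot_le
    by_cases hcx : 0 < (inner ℝ (n : Euc m) (x : Euc m) : ℝ)
    · have hLB : ((-Real.log (g n) : ℝ) : EReal) ≤ costE n x - ψ x := by
        rw [costE, if_pos hcx, ← EReal.coe_toReal (htop x) hbx, ← EReal.coe_sub,
          EReal.coe_le_coe_iff]
        set r := (ψ x).toReal with hr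
        have hax : a x = Real.exp r := by rw [ha]; exact if_neg hbx
        have hterm : Real.exp r * (inner ℝ (x : Euc m) (n : Euc m) : ℝ) ≤ g n := by
          have := hterm_le (n : Euc m) x
          rwa [hax] at this
        have hip : (inner ℝ (x : Euc m) (n : Euc m) : ℝ) = (inner ℝ (n : Euc m) (x : Euc m) : ℝ) :=
          real_inner_comm _ _
        have hpos' : 0 < Real.exp r * (inner ℝ (x : Euc m) (n : Euc m) : ℝ) := by
          rw [hip]; exact mul_pos (Real.exp_pos r) hcx
        have hlog := (Real.log_le_log_iff hpos' (lt_of_lt_of_le hpos' hterm)).mpr hterm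
        rw [Real.log_mul (Real.exp_ne_zero r) (by rw [hip]; exact hcx.ne'),
          Real.log_exp, hip] at hlog
        linarith
      rw [costE, if_pos hcx] at hLB ⊢
      rw [← EReal.coe_toReal (htop x) hbx, ← EReal.coe_sub, EReal.coe_le_coe_iff] at hLB
      beta_reduce
      rw [← EReal.coe_toReal (htop x) hbx, ← EReal.coe_sub, EReal.coe_le_coe_iff]
      linarith
    · rw [costE, if_neg hcx, EReal.top_sub_coe]
      exact le_top
end
end
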